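/- arXiv:2511.18218 — 9 statements merged into one kernel-verified Lean document; each statement's English description precedes it below -/
import Mathlib

section
/- Let A be a simple algebra in a pre-Tannakian category over a field k. Then Γ(A) = Hom(𝟙, A) is a finite field extension of k (i.e., a finite-dimensional commutative k-algebra that is a field). -/
open CategoryTheory CategoryTheory.Limits CategoryTheory.MonoidalCategory

/-!
We work with a pre-Tannakian category over a field `k`: an abelian `k`-linear symmetric
monoidal category with `k`-bilinear tensor product, in which every object has finite
length, all Hom-spaces are finite dimensional over `k`, every object is rigid, and the
canonical map `k → End 𝟙` is bijective. Algebras are commutative monoid objects.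
-/

section
variable {k : Type*} [Field k]
variable {C : Type*} [Category C] [Abelian C] [Linear k C]
  [MonoidalCategory C] [MonoidalPreadditive C] [MonoidalLinear k C]
  [SymmetricCategory C] [RigidCategory C]

/-- `I` is an ideal of the commutative algebra object `A`: the multiplication restricted
to `A ⊗ I` factors through `I`. -/
def IsIdeal (A : CommMon C) (I : Subobject A.X) : Prop :=
  I.Factors ((A.X ◁ I.arrow) ≫ MonObj.mul (X := A.X))

/-- A commutative algebra object is simple if it is nonzero and its only ideals are
the zero ideal and the unit ideal. -/
def IsSimpleAlgebra (A : CommMon C) : Prop :=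
  ¬ IsZero A.X ∧ ∀ I : Subobject A.X, IsIdeal A I → I = ⊥ ∨ I = ⊤

/-- The product on `Γ(A) = Hom(𝟙, A)`, given by `x · y = μ ∘ (x ⊗ y) ∘ (unitor)⁻¹`. -/
def gammaMul (A : CommMon C) (x y : 𝟙_ C ⟶ A.X) : 𝟙_ C ⟶ A.X :=
  (λ_ (𝟙_ C)).inv ≫ (x ⊗ₘ y) ≫ MonObj.mul (X := A.X)

/-- The morphism `A ⟶ Aᘁ` induced by a bilinear form `f : A ⊗ A ⟶ 𝟙`. -/
noncomputable def pairingHom (A : C) (f : A ⊗ A ⟶ 𝟙_ C) : A ⟶ Aᘁ :=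
  (tensorRightHomEquiv A A (Aᘁ) (𝟙_ C)) f ≫ (λ_ (Aᘁ)).hom

/-- A bilinear form `f : A ⊗ A ⟶ 𝟙` is perfect if the induced morphism `A ⟶ Aᘁ`
is an isomorphism. -/
def IsPerfectPairing (A : C) (f : A ⊗ A ⟶ 𝟙_ C) : Prop :=
  IsIso (pairingHom A f)

/-- The trace map `ε_A : A ⟶ 𝟙` of an algebra object: the mate `A ⟶ A ⊗ Aᘁ` of the
multiplication (encoding the action of `A` on itself by multiplication) composed with
the symmetry and the evaluation. -/
noncomputable def traceMap (A : CommMon C) : A.X ⟶ 𝟙_ C :=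
  (tensorRightHomEquiv A.X A.X (A.Xᘁ) A.X) (MonObj.mul (X := A.X)) ≫ (β_ A.X (A.Xᘁ)).hom ≫ ε_ A.X (A.Xᘁ)

/-- An algebra object is étale if its trace form `ε_A ∘ μ` is a perfect pairing. -/
noncomputable def IsEtale (A : CommMon C) : Prop :=
  IsPerfectPairing A.X (MonObj.mul (X := A.X) ≫ traceMap A)

/-- The categorical dimension of `X`, as an endomorphism of the unit object:
the composite of coevaluation, symmetry and evaluation. -/
noncomputable def dimMor (X : C) : 𝟙_ C ⟶ 𝟙_ C :=
  η_ X (Xᘁ) ≫ (β_ X (Xᘁ)).hom ≫ ε_ X (Xᘁ)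

/-- A category is semisimple if every object is a finite direct sum of simple objects. -/
def IsSemisimpleCategory : Prop :=
  haveI : HasFiniteBiproducts C := Abelian.hasFiniteBiproducts
  ∀ X : C, ∃ (n : ℕ) (f : Fin n → C), (∀ i, Simple (f i)) ∧ Nonempty (X ≅ ⨁ f)

end


section Aux
set_option linter.unusedSectionVars false
variable {k : Type*} [Field k]
variable {C : Type*} [Category C] [Abelian C] [Linear k C]
  [MonoidalCategory C] [MonoidalPreadditive C] [MonoidalLinear k C]
  [SymmetricCategory C] [RigidCategory C]

/-- Multiplication by `x` as an endomorphism of `A`. -/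
noncomputable def mulBy (A : CommMon C) (x : 𝟙_ C ⟶ A.X) : A.X ⟶ A.X :=
  (ρ_ A.X).inv ≫ (A.X ◁ x) ≫ MonObj.mul (X := A.X)

theorem comp_mulBy (A : CommMon C) (x w : 𝟙_ C ⟶ A.X) :
    w ≫ mulBy A x = gammaMul A w x := by
  rw [mulBy, gammaMul, rightUnitor_inv_naturality_assoc, ← tensorHom_def_assoc,
    unitors_inv_equal]

theorem gammaMul_one_left (A : CommMon C) (x : 𝟙_ C ⟶ A.X) :
    gammaMul A (MonObj.one (X := A.X)) x = x := by
  simp [gammaMul, tensorHom_def']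

theorem gammaMul_comm (A : CommMon C) (x y : 𝟙_ C ⟶ A.X) :
    gammaMul A x y = gammaMul A y x := by
  rw [gammaMul, ← IsCommMonObj.mul_comm A.X, BraidedCategory.braiding_naturality_assoc]
  simp only [gammaMul]
  rw [show (β_ (𝟙_ C) (𝟙_ C)).hom = 𝟙 _ from by
    rw [← Category.comp_id (β_ (𝟙_ C) (𝟙_ C)).hom, ← (ρ_ (𝟙_ C)).hom_inv_id,
      ← Category.assoc, braiding_rightUnitor, unitors_equal, Iso.hom_inv_id]]
  simp

theorem mulBy_key (A : CommMon C) (x : 𝟙_ C ⟶ A.X) :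
    (A.X ◁ mulBy A x) ≫ MonObj.mul (X := A.X) = MonObj.mul (X := A.X) ≫ mulBy A x := by
  simp only [mulBy, MonoidalCategory.whiskerLeft_comp, Category.assoc]
  rw [show A.X ◁ MonObj.mul (X := A.X) ≫ MonObj.mul (X := A.X) = (α_ A.X A.X A.X).inv ≫ (MonObj.mul (X := A.X) ▷ A.X) ≫ MonObj.mul (X := A.X) from by
      rw [MonObj.mul_assoc]; simp,
    associator_inv_naturality_right_assoc, whisker_exchange_assoc]
  slice_lhs 1 2 =>
    rw [show A.X ◁ (ρ_ A.X).inv ≫ (α_ A.X A.X (𝟙_ C)).inv = (ρ_ (A.X ⊗ A.X)).inv from by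
      monoidal]
  simp only [Category.assoc]
  rw [rightUnitor_inv_naturality_assoc]

theorem epi_whiskerLeft' (X : C) {Y Z : C} (e : Y ⟶ Z) [Epi e] : Epi (X ◁ e) := by
  haveI := (tensorLeftAdjunction (ᘁX) X).leftAdjoint_preservesColimits.{0, 0}
  have h : Epi ((tensorLeft X).map e) := inferInstance
  simpa using h

theorem isIdeal_imageSubobject (A : CommMon C) (x : 𝟙_ C ⟶ A.X) :
    IsIdeal A (imageSubobject (mulBy A x)) := by
  set f := mulBy A x with hf
  set e := factorThruImageSubobject f with he
  haveI : Epi (A.X ◁ e) := epi_whiskerLeft' _ _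
  haveI : StrongEpi (A.X ◁ e) := strongEpi_of_epi _
  haveI : HasLiftingProperty (A.X ◁ e) (imageSubobject f).arrow := StrongEpi.llp _
  have sq : CommSq (MonObj.mul (X := A.X) ≫ e) (A.X ◁ e) (imageSubobject f).arrow
      ((A.X ◁ (imageSubobject f).arrow) ≫ MonObj.mul (X := A.X)) := ⟨by
    rw [Category.assoc, he, imageSubobject_arrow_comp, ← MonoidalCategory.whiskerLeft_comp_assoc,
      imageSubobject_arrow_comp, mulBy_key]⟩
  show (imageSubobject f).Factors ((A.X ◁ (imageSubobject f).arrow) ≫ MonObj.mul (X := A.X))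
  rw [← sq.fac_right]
  exact Subobject.factors_comp_arrow _

end Aux

/-- Let `A` be a simple algebra in a pre-Tannakian category over a field
`k`. Then `Γ(A) = Hom(𝟙, A)` is a finite field extension of `k`: it is finite dimensional
over `k`, nontrivial, and every nonzero element is invertible. -/
theorem stmt_0 {k : Type*} [Field k]
    {C : Type*} [Category C] [Abelian C] [Linear k C]
    [MonoidalCategory C] [MonoidalPreadditive C] [MonoidalLinear k C]
    [SymmetricCategory C] [RigidCategory C]
    -- pre-Tannakian axioms: finite length, finite dimensional Hom spaces, `End 𝟙 = k`
    (hlen : ∀ X : C, WellFoundedGT (Subobject X) ∧ WellFoundedLT (Subobject X))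
    (hfin : ∀ X Y : C, FiniteDimensional k (X ⟶ Y))
    (hunit : Function.Bijective fun a : k => a • 𝟙 (𝟙_ C))
    (A : CommMon C) (hA : IsSimpleAlgebra A) :
    FiniteDimensional k (𝟙_ C ⟶ A.X) ∧ (MonObj.one (X := A.X) : 𝟙_ C ⟶ A.X) ≠ 0 ∧
      ∀ x : 𝟙_ C ⟶ A.X, x ≠ 0 → ∃ y : 𝟙_ C ⟶ A.X, gammaMul A x y = MonObj.one (X := A.X) := by
  obtain ⟨hnz, hsimple⟩ := hA
  refine ⟨hfin _ _, ?_, ?_⟩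
  · intro h
    apply hnz
    rw [IsZero.iff_id_eq_zero]
    have h1 := MonObj.one_mul A.X
    rw [h] at h1
    simp only [MonoidalPreadditive.zero_whiskerRight, Limits.zero_comp] at h1
    rw [← (λ_ A.X).inv_hom_id, ← h1, Limits.comp_zero]
  · intro x hx
    have hideal := hsimple (imageSubobject (mulBy A x)) (isIdeal_imageSubobject A x)
    rcases hideal with h | h
    · exfalso
      apply hx
      have harrow : (imageSubobject (mulBy A x)).arrow = 0 := by
        rw [h, Subobject.bot_arrow]
      have : mulBy A x = 0 := by
        rw [← imageSubobject_arrow_comp (mulBy A x), harrow, Limits.comp_zero]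
      rw [← gammaMul_one_left A x, ← comp_mulBy, this, Limits.comp_zero]
    · -- `mulBy A x` is epi
      haveI : IsIso (imageSubobject (mulBy A x)).arrow := by
        rw [Subobject.isIso_arrow_iff_eq_top]; exact h
      haveI hepi : Epi (mulBy A x) := by
        rw [← imageSubobject_arrow_comp (mulBy A x)]
        exact epi_comp _ _
      -- an epi endomorphism of an object with finite-dimensional endomorphism ring is iso
      haveI := hfin A.X A.X
      have hinj : Function.Injective (Linear.leftComp (R := k) A.X (mulBy A x)) :=
        fun a b hab => (cancel_epi (mulBy A x)).mp hab
      obtain ⟨g, hg⟩ := (LinearMap.injective_iff_surjective.mp hinj) (𝟙 A.X)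
      have hg' : mulBy A x ≫ g = 𝟙 A.X := hg
      haveI : Mono (mulBy A x) := ⟨fun u v huv => by
        have := congrArg (fun t => t ≫ g) huv
        simpa [hg'] using this⟩
      haveI : IsIso (mulBy A x) := isIso_of_mono_of_epi _
      refine ⟨MonObj.one (X := A.X) ≫ inv (mulBy A x), ?_⟩
      rw [gammaMul_comm, ← comp_mulBy, Category.assoc, IsIso.inv_hom_id, Category.comp_id]
end

section
/- Let A be a simple algebra in a pre-Tannakian category over a field k, and let λ : A → 𝟙 be a nonzero morphism. Then the bilinear form (·,·)_λ = λ ∘ μ : A ⊗ A → 𝟙 is perfect; that is, (A, λ) is a Frobenius algebra. -/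
open CategoryTheory CategoryTheory.Limits CategoryTheory.MonoidalCategory

section AuxLemmas

variable {D : Type*} [Category D] [MonoidalCategory D]

/-- Morphisms into a right dual are determined by the associated pairings. -/
theorem dual_hom_ext' {X W : D} [HasRightDual X] {u v : W ⟶ Xᘁ}
    (h : u ▷ X ≫ ε_ X (Xᘁ) = v ▷ X ≫ ε_ X (Xᘁ)) : u = v := by
  have h2 := congrArg (tensorRightHomEquiv W X (Xᘁ) (𝟙_ D)) h
  rw [tensorRightHomEquiv_whiskerRight_comp_evaluation,
    tensorRightHomEquiv_whiskerRight_comp_evaluation] at h2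
  exact (cancel_mono (λ_ (Xᘁ)).inv).mp h2

theorem tensorLeftHomEquiv_symm_zero' [Preadditive D] [MonoidalPreadditive D]
    (X Y Y' Z : D) [ExactPairing Y Y'] :
    (tensorLeftHomEquiv X Y Y' Z).symm 0 = 0 := by
  simp [tensorLeftHomEquiv]

end AuxLemmas

section AuxLemmas2
variable {k : Type*} [Field k]
variable {C : Type*} [Category C] [Abelian C] [Linear k C]
  [MonoidalCategory C] [MonoidalPreadditive C] [MonoidalLinear k C]
  [SymmetricCategory C] [RigidCategory C]

/-- In a rigid, monoidal preadditive category, the right adjoint mate of a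
monomorphism is an epimorphism. -/
theorem epi_rightAdjointMate_of_mono' {X Y : C} (f : X ⟶ Y) [Mono f] : Epi (fᘁ) := by
  rw [Preadditive.epi_iff_cancel_zero]
  intro Z g hg
  haveI : (tensorRight Z).PreservesMonomorphisms :=
    Functor.preservesMonomorphisms_of_adjunction (tensorRightAdjunction (ᘁZ) Z)
  haveI hm : Mono (f ▷ Z) := by
    have := (tensorRight Z).map_mono f
    simpa using this
  have h1 : (η_ X (Xᘁ) ≫ X ◁ g) ≫ f ▷ Z = 0 := by
    rw [Category.assoc, whisker_exchange, ← Category.assoc,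
      ← coevaluation_comp_rightAdjointMate, Category.assoc,
      ← MonoidalCategory.whiskerLeft_comp, hg]
    simp
  have h2 : η_ X (Xᘁ) ≫ X ◁ g = 0 := zero_of_comp_mono _ h1
  have h3 := congrArg (tensorLeftHomEquiv (𝟙_ C) X (Xᘁ) Z).symm h2
  rw [tensorLeftHomEquiv_symm_coevaluation_comp_whiskerLeft, tensorLeftHomEquiv_symm_zero'] at h3
  rw [← cancel_epi (ρ_ (Xᘁ)).hom, h3, comp_zero]

/-- The pairing associated to `pairingHom` recovers the original bilinear form. -/
theorem pairingHom_whiskerRight_evaluation (X : C) (f : X ⊗ X ⟶ 𝟙_ C) :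
    (pairingHom X f) ▷ X ≫ ε_ X (Xᘁ) = f := by
  apply (tensorRightHomEquiv X X (Xᘁ) (𝟙_ C)).injective
  rw [tensorRightHomEquiv_whiskerRight_comp_evaluation]
  simp [pairingHom]

end AuxLemmas2

/-- Let `A` be a simple algebra in a pre-Tannakian category over a field
`k`, and let `λ : A → 𝟙` be a nonzero morphism. Then the bilinear form
`(·,·)_λ = λ ∘ μ : A ⊗ A ⟶ 𝟙` is perfect; that is, `(A, λ)` is a Frobenius algebra. -/
theorem stmt_2 {k : Type*} [Field k]
    {C : Type*} [Category C] [Abelian C] [Linear k C]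
    [MonoidalCategory C] [MonoidalPreadditive C] [MonoidalLinear k C]
    [SymmetricCategory C] [RigidCategory C]
    (hlen : ∀ X : C, WellFoundedGT (Subobject X) ∧ WellFoundedLT (Subobject X))
    (hfin : ∀ X Y : C, FiniteDimensional k (X ⟶ Y))
    (hunit : Function.Bijective fun a : k => a • 𝟙 (𝟙_ C))
    (A : CommMon C) (hA : IsSimpleAlgebra A)
    (lam : A.X ⟶ 𝟙_ C) (hlam : lam ≠ 0) :
    IsPerfectPairing A.X (MonObj.mul (X := A.X) ≫ lam) := by
  set φ := pairingHom A.X (MonObj.mul (X := A.X) ≫ lam) with hφdef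
  have hPf : φ ▷ A.X ≫ ε_ A.X (A.Xᘁ) = MonObj.mul (X := A.X) ≫ lam :=
    pairingHom_whiskerRight_evaluation A.X (MonObj.mul (X := A.X) ≫ lam)
  -- translation between vanishing against `φ` and vanishing of the pairing
  have fwd : ∀ {W : C} (h : W ⟶ A.X), h ≫ φ = 0 → (h ▷ A.X) ≫ MonObj.mul (X := A.X) ≫ lam = 0 := by
    intro W h hh
    rw [← hPf, ← Category.assoc, ← comp_whiskerRight, hh]
    simp
  have bwd : ∀ {W : C} (h : W ⟶ A.X), (h ▷ A.X) ≫ MonObj.mul (X := A.X) ≫ lam = 0 → h ≫ φ = 0 := by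
    intro W h hh
    apply dual_hom_ext' (X := A.X)
    rw [comp_whiskerRight, Category.assoc, hPf, hh]
    simp
  -- commutativity : multiplying on the left equals multiplying on the right
  have hcomm0 : ∀ {V : C} (g : V ⟶ A.X),
      (A.X ◁ g) ≫ MonObj.mul (X := A.X) = (β_ A.X V).hom ≫ (g ▷ A.X) ≫ MonObj.mul (X := A.X) := by
    intro V g
    conv_lhs => rw [← IsCommMonObj.mul_comm A.X]
    rw [BraidedCategory.braiding_naturality_right_assoc]
  have hcomm : ∀ {V Z : C} (g : V ⟶ A.X) (h : A.X ⟶ Z),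
      (A.X ◁ g) ≫ MonObj.mul (X := A.X) ≫ h = (β_ A.X V).hom ≫ (g ▷ A.X) ≫ MonObj.mul (X := A.X) ≫ h := by
    intro V Z g h
    rw [← Category.assoc, hcomm0]
    simp only [Category.assoc]
  -- `φ` is a monomorphism, since its kernel is an ideal
  haveI hmono : Mono φ := by
    have harrow : (kernelSubobject φ).arrow ≫ φ = 0 := kernelSubobject_arrow_comp φ
    have hidl : IsIdeal A (kernelSubobject φ) := by
      apply kernelSubobject_factors
      apply bwd
      have hk : ((kernelSubobject φ).arrow ▷ A.X) ≫ MonObj.mul (X := A.X) ≫ lam = 0 := fwd _ harrow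
      set kk := (kernelSubobject φ).arrow with hkk
      simp only [comp_whiskerRight, Category.assoc]
      rw [MonObj.mul_assoc_assoc, associator_naturality_middle_assoc,
        ← MonoidalCategory.whiskerLeft_comp_assoc, hcomm]
      simp only [comp_whiskerRight, Category.assoc]
      rw [MonObj.mul_assoc_assoc, associator_naturality_left_assoc,
        ← whisker_exchange_assoc]
      rw [hk]
      simp
    rcases hA.2 _ hidl with hbot | htop
    · rw [Preadditive.mono_iff_cancel_zero]
      intro W h hh
      have hfac := kernelSubobject_factors φ h hh
      rw [hbot] at hfac
      exact (Subobject.bot_factors_iff_zero _).mp hfac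
    · exfalso
      haveI : IsIso (kernelSubobject φ).arrow :=
        (Subobject.isIso_arrow_iff_eq_top _).mpr htop
      have hφ0 : φ = 0 := by
        rw [← cancel_epi (kernelSubobject φ).arrow, harrow, comp_zero]
      have hml : MonObj.mul (X := A.X) ≫ lam = 0 := by
        rw [← hPf, hφ0]; simp
      apply hlam
      calc lam = (λ_ A.X).inv ≫ ((MonObj.one (X := A.X) ▷ A.X) ≫ MonObj.mul (X := A.X)) ≫ lam := by
            rw [MonObj.one_mul A.X]; simp
        _ = 0 := by rw [Category.assoc, hml]; simp
  -- `φ` is an epimorphism, by symmetry of the form and duality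
  haveI hepi' : Epi (rightAdjointMate φ) := epi_rightAdjointMate_of_mono' φ
  have hi : (rightDualIso (BraidedCategory.exactPairing_swap A.X (A.Xᘁ))
        (inferInstance : ExactPairing (A.Xᘁ) ((A.Xᘁ)ᘁ : C))).hom ▷ (A.Xᘁ) ≫
        ε_ (A.Xᘁ) ((A.Xᘁ)ᘁ : C)
      = (β_ A.X (A.Xᘁ)).hom ≫ ε_ A.X (A.Xᘁ) := by
    have h := @rightAdjointMate_comp_evaluation C _ _ (A.Xᘁ) (A.Xᘁ)
      inferInstance
      (@HasRightDual.mk C _ _ (A.Xᘁ) A.X (BraidedCategory.exactPairing_swap A.X (A.Xᘁ)))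
      (𝟙 (A.Xᘁ))
    have h2 : (A.X ◁ 𝟙 (A.Xᘁ)) ≫
        @ExactPairing.evaluation' C _ _ (A.Xᘁ) A.X
          (BraidedCategory.exactPairing_swap A.X (A.Xᘁ))
        = (β_ A.X (A.Xᘁ)).hom ≫ ε_ A.X (A.Xᘁ) := by
      rw [MonoidalCategory.whiskerLeft_id, Category.id_comp]
      rfl
    exact h.trans h2
  have hkey : (rightDualIso (BraidedCategory.exactPairing_swap A.X (A.Xᘁ))
        (inferInstance : ExactPairing (A.Xᘁ) ((A.Xᘁ)ᘁ : C))).hom ≫ (rightAdjointMate φ) = φ := by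
    apply dual_hom_ext' (X := A.X)
    rw [comp_whiskerRight, Category.assoc, rightAdjointMate_comp_evaluation,
      ← whisker_exchange_assoc, hi, BraidedCategory.braiding_naturality_right_assoc, hPf]
    rw [IsCommMonObj.mul_comm_assoc]
  haveI hepi : Epi φ := by
    rw [← hkey]; exact epi_comp _ _
  exact isIso_of_mono_of_epi φ
end

section
/- Let G be a group and U a subgroup of G such that the set U\G/U of double cosets is finite, with m elements. Then every strictly increasing chain of subgroups U = U₀ ⊊ U₁ ⊊ ⋯ ⊊ U_n ⊆ G satisfies n ≤ m. -/
/-- Let `G` be a group and `U` a subgroup of `G` such that the set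
`U\G/U` of double cosets is finite, with `m` elements. Then every strictly increasing
chain of subgroups `U = U₀ ⊊ U₁ ⊊ ⋯ ⊊ U_n ⊆ G` satisfies `n ≤ m`. -/
theorem stmt_10 {G : Type*} [Group G] (U : Subgroup G) (m : ℕ)
    (hfin : Nat.card (DoubleCoset.Quotient (U : Set G) (U : Set G)) = m)
    (hpos : Finite (DoubleCoset.Quotient (U : Set G) (U : Set G)))
    (n : ℕ) (c : Fin (n + 1) → Subgroup G)
    (hc0 : c 0 = U) (hc : StrictMono c) :
    n ≤ m := by
  have hUle : ∀ i : Fin (n + 1), U ≤ c i := by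
    intro i
    rw [← hc0]
    exact hc.monotone (Fin.zero_le i)
  set f : Fin (n + 1) → Set (DoubleCoset.Quotient (U : Set G) (U : Set G)) :=
    fun i => {q | q.out ∈ c i} with hf
  have hfmono : StrictMono f := by
    intro i j hij
    constructor
    · intro q hq
      exact hc.monotone hij.le hq
    · intro hsub
      obtain ⟨g, hgj, hgi⟩ := SetLike.exists_of_lt (hc hij)
      set q := DoubleCoset.mk U U g with hq
      have hout : DoubleCoset.mk U U q.out = DoubleCoset.mk U U g := by
        rw [DoubleCoset.out_eq']
      obtain ⟨h, hh, k, hk, hgeq⟩ := (DoubleCoset.eq U U q.out g).mp hout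
      have houtj : q.out ∈ c j := by
        have : q.out = h⁻¹ * g * k⁻¹ := by
          rw [hgeq]; group
        rw [this]
        exact mul_mem (mul_mem (inv_mem (hUle j hh)) hgj) (inv_mem (hUle j hk))
      have houti : q.out ∉ c i := by
        intro hmem
        apply hgi
        rw [hgeq]
        exact mul_mem (mul_mem (hUle i hh) hmem) (hUle i hk)
      exact houti (hsub houtj)
  have hcard : ∀ i j : Fin (n + 1), i < j → (f i).ncard < (f j).ncard := by
    intro i j hij
    exact Set.ncard_lt_ncard (hfmono hij) (Set.toFinite _)
  have hle : ∀ k (hk : k < n + 1), k ≤ (f ⟨k, hk⟩).ncard := by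
    intro k
    induction k with
    | zero => intro _; exact Nat.zero_le _
    | succ k ih =>
      intro hk
      have hk' : k < n + 1 := Nat.lt_of_succ_lt hk
      have h1 := hcard ⟨k, hk'⟩ ⟨k + 1, hk⟩ (by simp)
      have h2 := ih hk'
      omega
  have hlast := hle n (Nat.lt_succ_self n)
  have : (f ⟨n, Nat.lt_succ_self n⟩).ncard ≤ m := by
    rw [← hfin, ← Set.ncard_univ]
    exact Set.ncard_le_ncard (Set.subset_univ _) (Set.toFinite _)
  omega
end

section
/- Let G be a group, let U be a subgroup of G such that the set U\G/U of double cosets is finite, and let g ∈ G. If U ⊆ gUg⁻¹, then U = gUg⁻¹. -/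
/-- Let `G` be a group, let `U` be a subgroup of `G` such that the set
`U\G/U` of double cosets is finite, and let `g ∈ G`. If `U ⊆ gUg⁻¹`, then `U = gUg⁻¹`. -/
theorem stmt_11 {G : Type*} [Group G] (U : Subgroup G)
    (hfin : Finite (DoubleCoset.Quotient (U : Set G) (U : Set G)))
    (g : G) (hle : U ≤ Subgroup.map (MulAut.conj g).toMonoidHom U) :
    U = Subgroup.map (MulAut.conj g).toMonoidHom U := by
  -- From `hle`, for every `u ∈ U`, `g⁻¹ * u * g ∈ U`.
  have hconj : ∀ u ∈ U, g⁻¹ * u * g ∈ U := by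
    intro u hu
    obtain ⟨w, hw, hwe⟩ := hle hu
    simp only [MulEquiv.coe_toMonoidHom, MulAut.conj_apply] at hwe
    have : g⁻¹ * u * g = w := by rw [← hwe]; group
    rwa [this]
  -- The self-map of `U\G/U` induced by `x ↦ g⁻¹ * x * g`.
  let f : DoubleCoset.Quotient (U : Set G) (U : Set G) → DoubleCoset.Quotient (U : Set G) (U : Set G) :=
    Quotient.map' (fun x => g⁻¹ * x * g) (by
      intro x y h
      rw [DoubleCoset.rel_iff] at h ⊢
      obtain ⟨a, ha, b, hb, rfl⟩ := h
      exact ⟨g⁻¹ * a * g, hconj a ha, g⁻¹ * b * g, hconj b hb, by group⟩)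
  have hf : ∀ x : G, f (DoubleCoset.mk U U x) = DoubleCoset.mk U U (g⁻¹ * x * g) := fun x => rfl
  have hsurj : Function.Surjective f := by
    intro q
    obtain ⟨x, rfl⟩ := Quotient.exists_rep q
    exact ⟨DoubleCoset.mk U U (g * x * g⁻¹), by rw [hf]; congr 1; group⟩
  have hinj : Function.Injective f := (Finite.injective_iff_surjective).2 hsurj
  refine le_antisymm hle ?_
  rintro u hu
  obtain ⟨w, hw, rfl⟩ := hu
  simp only [MulEquiv.coe_toMonoidHom, MulAut.conj_apply]
  have key : DoubleCoset.mk U U (g * w * g⁻¹) = DoubleCoset.mk U U 1 := by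
    apply hinj
    rw [hf, hf]
    rw [DoubleCoset.eq]
    exact ⟨1, U.one_mem, w⁻¹, U.inv_mem hw, by group⟩
  rw [DoubleCoset.eq] at key
  obtain ⟨h, hh, k, hk, hke⟩ := key
  have hx : g * w * g⁻¹ = h⁻¹ * k⁻¹ := by
    calc g * w * g⁻¹ = h⁻¹ * (h * (g * w * g⁻¹) * k) * k⁻¹ := by group
    _ = h⁻¹ * 1 * k⁻¹ := by rw [← hke]
    _ = h⁻¹ * k⁻¹ := by group
  rw [hx]
  exact U.mul_mem (U.inv_mem hh) (U.inv_mem hk)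
end

section
/- Let G be a topological group such that for every open subgroup U of G, the double coset space U\G/U is finite and the normalizer N_G(U) equals U. Let H be any topological group, and let W be an open subgroup of G × H (with the product topology). Then W = U × V, where U = {g ∈ G : (g, 1) ∈ W} and V = {h ∈ H : (1, h) ∈ W}; in particular, every open subgroup of G × H is a product of an open subgroup of G and an open subgroup of H. -/
/-- Let `G` be a topological group such that for every open subgroup `U`
of `G`, the double coset space `U\G/U` is finite and the normalizer `N_G(U)` equals `U`.
Let `H` be any topological group, and let `W` be an open subgroup of `G × H`. Then
`W = U × V`, where `U = {g : (g,1) ∈ W}` and `V = {h : (1,h) ∈ W}`; in particular `U` and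
`V` are open, so every open subgroup of `G × H` is a product of open subgroups. -/
theorem stmt_12 {G : Type*} [Group G] [TopologicalSpace G] [IsTopologicalGroup G]
    {H : Type*} [Group H] [TopologicalSpace H] [IsTopologicalGroup H]
    (hG : ∀ U : Subgroup G, IsOpen (U : Set G) →
      Finite (DoubleCoset.Quotient (U : Set G) (U : Set G)) ∧ Subgroup.normalizer (U : Set G) = U)
    (W : Subgroup (G × H)) (hW : IsOpen (W : Set (G × H))) :
    W = (W.comap (MonoidHom.inl G H)).prod (W.comap (MonoidHom.inr G H)) ∧
      IsOpen ((W.comap (MonoidHom.inl G H) : Subgroup G) : Set G) ∧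
      IsOpen ((W.comap (MonoidHom.inr G H) : Subgroup H) : Set H) := by
  have hU : IsOpen ((W.comap (MonoidHom.inl G H) : Subgroup G) : Set G) := by
    have hc : Continuous (fun g : G => ((g, 1) : G × H)) := by continuity
    exact hW.preimage hc
  have hV : IsOpen ((W.comap (MonoidHom.inr G H) : Subgroup H) : Set H) := by
    have hc : Continuous (fun h : H => ((1, h) : G × H)) := by continuity
    exact hW.preimage hc
  refine ⟨?_, hU, hV⟩
  apply le_antisymm
  · rintro ⟨g, h⟩ hgh
    have hg : g ∈ W.comap (MonoidHom.inl G H) := by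
      rw [← (hG _ hU).2]
      rw [Subgroup.mem_normalizer_iff]
      intro u
      constructor
      · intro hu
        have : (g, h) * (u, 1) * (g, h)⁻¹ ∈ W := W.mul_mem (W.mul_mem hgh hu) (W.inv_mem hgh)
        simpa [Subgroup.mem_comap, Prod.mk_mul_mk, mul_inv_cancel] using this
      · intro hu
        have : (g, h)⁻¹ * (g * u * g⁻¹, 1) * (g, h) ∈ W :=
          W.mul_mem (W.mul_mem (W.inv_mem hgh) hu) hgh
        simpa [Subgroup.mem_comap, Prod.mk_mul_mk, mul_assoc] using this
    refine ⟨hg, ?_⟩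
    have : ((g, 1) : G × H)⁻¹ * (g, h) ∈ W := W.mul_mem (W.inv_mem hg) hgh
    simpa [Subgroup.mem_comap] using this
  · rintro ⟨g, h⟩ ⟨hg, hh⟩
    have : ((g, 1) : G × H) * (1, h) ∈ W := W.mul_mem hg hh
    simpa using this
end

section
/- Let G be a topological group such that every open subgroup of G × G (with the product topology) is of the form U × V for some open subgroups U, V of G. Then every open subgroup of G equals its own normalizer. -/
/-- Let `G` be a topological group such that every open subgroup of
`G × G` (with the product topology) is of the form `U × V` for some open subgroups
`U, V` of `G`. Then every open subgroup of `G` equals its own normalizer. -/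
theorem stmt_13 {G : Type*} [Group G] [TopologicalSpace G] [IsTopologicalGroup G]
    (h : ∀ W : Subgroup (G × G), IsOpen (W : Set (G × G)) →
      ∃ U V : Subgroup G, IsOpen (U : Set G) ∧ IsOpen (V : Set G) ∧ W = U.prod V) :
    ∀ U : Subgroup G, IsOpen (U : Set G) → Subgroup.normalizer (U : Set G) = U := by
  intro U hU
  refine le_antisymm ?_ Subgroup.le_normalizer
  intro n hn
  -- the subgroup W = {(g,h) : g,h ∈ N(U), g⁻¹h ∈ U}
  set N := Subgroup.normalizer (U : Set G) with hN
  have key : ∀ g : G, g ∈ N → ∀ u : G, u ∈ U → g⁻¹ * u * g ∈ U := by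
    intro g hg u hu
    have hg' := N.inv_mem hg
    rw [Subgroup.mem_normalizer_iff] at hg'
    simpa [mul_assoc] using (hg' u).mp hu
  let W : Subgroup (G × G) :=
  { carrier := {p : G × G | p.1 ∈ N ∧ p.2 ∈ N ∧ p.1⁻¹ * p.2 ∈ U}
    one_mem' := ⟨N.one_mem, N.one_mem, by simpa using U.one_mem⟩
    mul_mem' := by
      rintro ⟨g, k⟩ ⟨g', k'⟩ ⟨hg, hk, hu⟩ ⟨hg', hk', hu'⟩
      refine ⟨N.mul_mem hg hg', N.mul_mem hk hk', ?_⟩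
      show (g * g')⁻¹ * (k * k') ∈ U
      have e : (g * g')⁻¹ * (k * k') = (g'⁻¹ * (g⁻¹ * k) * g') * (g'⁻¹ * k') := by
        group
      rw [e]
      exact U.mul_mem (key g' hg' _ hu) hu'
    inv_mem' := by
      rintro ⟨g, k⟩ ⟨hg, hk, hu⟩
      refine ⟨N.inv_mem hg, N.inv_mem hk, ?_⟩
      show g⁻¹⁻¹ * k⁻¹ ∈ U
      have e : g⁻¹⁻¹ * k⁻¹ = g * (g⁻¹ * k)⁻¹ * g⁻¹ := by group
      rw [e, Subgroup.mem_normalizer_iff] at *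
      exact (hg _).mp (U.inv_mem hu) }
  have hWopen : IsOpen (W : Set (G × G)) := by
    have hle : U.prod U ≤ W := by
      rintro ⟨g, k⟩ hgk
      rw [Subgroup.mem_prod] at hgk
      exact ⟨Subgroup.le_normalizer hgk.1, Subgroup.le_normalizer hgk.2,
        U.mul_mem (U.inv_mem hgk.1) hgk.2⟩
    exact Subgroup.isOpen_mono hle (hU.prod hU)
  obtain ⟨A, B, hA, hB, hAB⟩ := h W hWopen
  have hnn : (n, n) ∈ W := ⟨hn, hn, by simpa using U.one_mem⟩
  have h11 : ((1 : G), (1 : G)) ∈ W := W.one_mem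
  rw [hAB, Subgroup.mem_prod] at hnn h11
  have hn1 : (n, (1 : G)) ∈ W := by
    rw [hAB, Subgroup.mem_prod]; exact ⟨hnn.1, h11.2⟩
  have : n⁻¹ * 1 ∈ U := hn1.2.2
  simpa using U.inv_mem this
end

section
/- Let G be a topological group such that the double coset space U\G/U is finite for every open subgroup U of G. Then the following are equivalent: (i) every open subgroup of G equals its own normalizer; (ii) whenever V ⊆ U are open subgroups of G with V of finite index in U, one has V = U. -/
/-- Let `G` be a topological group such that the double coset space
`U\G/U` is finite for every open subgroup `U` of `G`. Then the following are equivalent: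
(i) every open subgroup of `G` equals its own normalizer; (ii) whenever `V ⊆ U` are open
subgroups of `G` with `V` of finite index in `U`, one has `V = U`. -/
theorem stmt_14 {G : Type*} [Group G] [TopologicalSpace G] [IsTopologicalGroup G]
    (hG : ∀ U : Subgroup G, IsOpen (U : Set G) →
      Finite (DoubleCoset.Quotient (U : Set G) (U : Set G))) :
    (∀ U : Subgroup G, IsOpen (U : Set G) → Subgroup.normalizer (U : Set G) = U) ↔
      (∀ U V : Subgroup G, IsOpen (U : Set G) → IsOpen (V : Set G) →
        V ≤ U → V.relIndex U ≠ 0 → V = U) := by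
  constructor
  · -- (i) → (ii)
    intro hi U V hU hV hVU hrel
    -- conjugate subgroups
    set f : G → Subgroup G := fun u => V.comap ((MulAut.conj u)⁻¹).toMonoidHom with hf
    have hmemf : ∀ u x : G, x ∈ f u ↔ u⁻¹ * x * u ∈ V := by
      intro u x
      simp [hf, Subgroup.mem_comap, MulAut.conj_apply, mul_assoc]
    set F : (U ⧸ V.subgroupOf U) → Subgroup G :=
      fun q => Quotient.liftOn' q (fun u => f u) (by
        intro a b hab
        rw [QuotientGroup.leftRel_apply] at hab
        have hab' : (a : G)⁻¹ * b ∈ V := hab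
        ext x
        rw [hmemf, hmemf]
        constructor
        · intro h
          have := V.mul_mem (V.mul_mem (V.inv_mem hab') h) hab'
          simpa [mul_assoc] using this
        · intro h
          have := V.mul_mem (V.mul_mem hab' h) (V.inv_mem hab')
          simpa [mul_assoc] using this) with hF
    set W : Subgroup G := ⨅ q, F q with hW
    have hmemW : ∀ x : G, x ∈ W ↔ ∀ u : U, (u : G)⁻¹ * x * u ∈ V := by
      intro x
      rw [hW, Subgroup.mem_iInf]
      constructor
      · intro h u
        have := h (Quotient.mk'' u)
        rw [hF] at this
        simp only [Quotient.liftOn'_mk''] at this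
        rwa [hmemf] at this
      · intro h q
        induction q using Quotient.inductionOn' with
        | h u => rw [hF]; simp only [Quotient.liftOn'_mk'']; rw [hmemf]; exact h u
    -- finiteness of the quotient
    have hfin : Finite (U ⧸ V.subgroupOf U) := by
      apply Nat.finite_of_card_ne_zero
      rwa [← Subgroup.index_eq_card, ← Subgroup.relIndex]
    -- W is open
    have hWopen : IsOpen (W : Set G) := by
      rw [hW, Subgroup.coe_iInf]
      apply isOpen_iInter_of_finite
      intro q
      induction q using Quotient.inductionOn' with
      | h u =>
        have : (F (Quotient.mk'' u) : Set G) = (fun x => (u : G)⁻¹ * x * u) ⁻¹' V := by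
          ext x
          simp only [Set.mem_preimage, SetLike.mem_coe]
          rw [hF]; simp only [Quotient.liftOn'_mk'']; rw [hmemf]
        rw [this]
        exact hV.preimage (by continuity)
    -- W ≤ V
    have hWV : W ≤ V := by
      intro x hx
      have := (hmemW x).1 hx 1
      simpa using this
    -- U normalizes W
    have hUN : U ≤ Subgroup.normalizer (W : Set G) := by
      intro u hu
      rw [Subgroup.mem_normalizer_iff]
      intro h
      rw [hmemW, hmemW]
      constructor
      · intro hh w
        have := hh (⟨u, hu⟩⁻¹ * w)
        simpa [mul_assoc] using this
      · intro hh w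
        have := hh (⟨u, hu⟩ * w)
        simpa [mul_assoc] using this
    have := hi W hWopen
    exact le_antisymm hVU (le_trans (this ▸ hUN) hWV)
  · -- (ii) → (i)
    intro hii U hU
    set N := Subgroup.normalizer (U : Set G) with hN
    have hUN : U ≤ N := Subgroup.le_normalizer
    have hNopen : IsOpen (N : Set G) := Subgroup.isOpen_mono hUN hU
    -- injection from N ⧸ U into double cosets
    have hinj : ∃ φ : (N ⧸ U.subgroupOf N) → DoubleCoset.Quotient (U : Set G) (U : Set G),
        Function.Injective φ := by
      refine ⟨fun q => Quotient.liftOn' q (fun n => DoubleCoset.mk U U (n : G)) ?_, ?_⟩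
      · intro a b hab
        rw [QuotientGroup.leftRel_apply] at hab
        rw [DoubleCoset.eq]
        exact ⟨1, U.one_mem, (a : G)⁻¹ * b, hab, by group⟩
      · intro q₁ q₂
        induction q₁ using Quotient.inductionOn' with
        | h a =>
          induction q₂ using Quotient.inductionOn' with
          | h b =>
            intro h
            simp only [Quotient.liftOn'_mk''] at h
            rw [DoubleCoset.eq] at h
            obtain ⟨h₁, hh₁, k, hk, hbak⟩ := h
            apply Quotient.sound'
            rw [QuotientGroup.leftRel_apply]
            show (a : G)⁻¹ * b ∈ U
            rw [hbak]
            have ha : (a : G) ∈ Subgroup.normalizer (U : Set G) := a.2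
            rw [Subgroup.mem_normalizer_iff] at ha
            have : (a : G)⁻¹ * h₁ * a ∈ U := by
              have := (ha ((a : G)⁻¹ * h₁ * a)).2 (by
                have : (a : G) * ((a : G)⁻¹ * h₁ * a) * (a : G)⁻¹ = h₁ := by group
                rwa [this])
              exact this
            have : (a : G)⁻¹ * (h₁ * a * k) = ((a : G)⁻¹ * h₁ * a) * k := by group
            rw [this]
            exact U.mul_mem ‹_› hk
    obtain ⟨φ, hφ⟩ := hinj
    have : Finite (DoubleCoset.Quotient (U : Set G) (U : Set G)) := hG U hU
    have hfin : Finite (N ⧸ U.subgroupOf N) := Finite.of_injective φ hφ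
    have hrel : U.relIndex N ≠ 0 := by
      rw [Subgroup.relIndex, Subgroup.index_eq_card, Nat.card_ne_zero]
      exact ⟨⟨QuotientGroup.mk 1⟩, hfin⟩
    exact (hii N U hNopen hU hUN hrel).symm
end

section
/- Let L and K be pro-oligomorphic groups and let Θ : S(L) → S(K) be an exact atomic functor. Let X be an object of S(L), let Z be an object of S(K), and let f : Θ(X) → Z be a surjective morphism in S(K). Then there exist an object Y of S(L), a surjective morphism X → Y in S(L), and an isomorphism Θ(Y) ≅ Z in S(K). -/
open CategoryTheory

/-- A finitary smooth `G`-set for a topological group `G`: a `G`-action such that every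
point stabilizer is open and there are finitely many orbits. -/
structure SmGSet (G : Type) [Group G] [TopologicalSpace G] : Type 1 where
  /-- the underlying set -/
  α : Type
  /-- the action -/
  smul : G → α → α
  one_smul : ∀ x, smul 1 x = x
  mul_smul : ∀ g h x, smul (g * h) x = smul g (smul h x)
  /-- smoothness: every point stabilizer is an open subgroup -/
  smooth : ∀ x : α, IsOpen {g : G | smul g x = x}
  /-- finitarity: there are finitely many orbits -/
  finitary : Finite (Quot fun x y : α => ∃ g : G, smul g x = y)

namespace SmGSet

variable {G : Type} [Group G] [TopologicalSpace G]

/-- Morphisms of `G`-sets: equivariant maps. -/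
@[ext]
structure SmHom (X Y : SmGSet G) where
  toFun : X.α → Y.α
  equivariant : ∀ (g : G) (x : X.α), toFun (X.smul g x) = Y.smul g (toFun x)

/-- The category `S(G)` of finitary smooth `G`-sets. -/
instance : Category (SmGSet G) where
  Hom := SmHom
  id X := ⟨fun x => x, fun _ _ => rfl⟩
  comp f g := ⟨fun x => g.toFun (f.toFun x), fun a x => by
    try dsimp only
    rw [f.equivariant, g.equivariant]⟩

/-- A `G`-set is transitive if it is nonempty and has a single orbit. -/
def IsTransitive (X : SmGSet G) : Prop :=
  Nonempty X.α ∧ ∀ x y : X.α, ∃ g : G, X.smul g x = y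

/-- The orbit equivalence relation is an equivalence. -/
theorem orbRel_equiv (X : SmGSet G) :
    Equivalence fun x y : X.α => ∃ g : G, X.smul g x = y := by
  constructor
  · intro x; exact ⟨1, X.one_smul x⟩
  · rintro x y ⟨g, rfl⟩
    exact ⟨g⁻¹, by rw [← X.mul_smul, inv_mul_cancel, X.one_smul]⟩
  · rintro x y z ⟨g, rfl⟩ ⟨h, rfl⟩
    exact ⟨h * g, X.mul_smul h g x⟩

/-- A finitary `G`-set admits a finite orbit transversal. -/
theorem exists_transversal (X : SmGSet G) :
    ∃ S : Set X.α, S.Finite ∧ ∀ x : X.α, ∃ s ∈ S, ∃ g : G, X.smul g s = x := by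
  haveI := X.finitary
  refine ⟨Set.range (fun q : Quot fun x y : X.α => ∃ g : G, X.smul g x = y => q.out),
    Set.finite_range _, fun x => ?_⟩
  refine ⟨(Quot.mk _ x).out, ⟨_, rfl⟩, ?_⟩
  have h : Quot.mk _ (Quot.mk (fun x y : X.α => ∃ g : G, X.smul g x = y) x).out
      = Quot.mk _ x := Quot.out_eq _
  exact (X.orbRel_equiv.eqvGen_iff).mp (Quot.eq.mp h)

/-- The stabilizer of a point, as a subgroup. -/
def stab (X : SmGSet G) (x : X.α) : Subgroup G where
  carrier := {g | X.smul g x = x}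
  one_mem' := X.one_smul x
  mul_mem' := by
    intro a b ha hb
    simp only [Set.mem_setOf_eq] at *
    rw [X.mul_smul, hb, ha]
  inv_mem' := by
    intro a ha
    simp only [Set.mem_setOf_eq] at *
    have h : X.smul a⁻¹ (X.smul a x) = x := by
      rw [← X.mul_smul, inv_mul_cancel, X.one_smul]
    rwa [ha] at h

theorem stab_isOpen (X : SmGSet G) (x : X.α) : IsOpen ((X.stab x : Subgroup G) : Set G) :=
  X.smooth x

end SmGSet

namespace SmGSet

variable {G : Type} [Group G] [TopologicalSpace G]

/-- The external product of a `G`-set and an `H`-set, as a `(G × H)`-set. -/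
def eprod {H : Type} [Group H] [TopologicalSpace H]
    (X : SmGSet G) (Y : SmGSet H) : SmGSet (G × H) where
  α := X.α × Y.α
  smul p q := (X.smul p.1 q.1, Y.smul p.2 q.2)
  one_smul q := by
    have h1 : X.smul 1 q.1 = q.1 := X.one_smul q.1
    have h2 : Y.smul 1 q.2 = q.2 := Y.one_smul q.2
    simp [h1, h2]
  mul_smul p p' q := by
    have h1 : X.smul (p.1 * p'.1) q.1 = X.smul p.1 (X.smul p'.1 q.1) := X.mul_smul _ _ _
    have h2 : Y.smul (p.2 * p'.2) q.2 = Y.smul p.2 (Y.smul p'.2 q.2) := Y.mul_smul _ _ _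
    simp [Prod.mul_def, h1, h2]
  smooth q := by
    have h : {p : G × H | (X.smul p.1 q.1, Y.smul p.2 q.2) = q} =
        {g : G | X.smul g q.1 = q.1} ×ˢ {h : H | Y.smul h q.2 = q.2} := by
      ext p
      simp only [Set.mem_setOf_eq, Set.mem_prod, Prod.ext_iff]
    rw [h]
    exact (X.smooth q.1).prod (Y.smooth q.2)
  finitary := by
    obtain ⟨SX, hSXfin, hSX⟩ := X.exists_transversal
    obtain ⟨SY, hSYfin, hSY⟩ := Y.exists_transversal
    haveI := hSXfin.to_subtype
    haveI := hSYfin.to_subtype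
    refine Finite.of_surjective
      (fun w : SX × SY => Quot.mk _ ((w.1 : X.α), (w.2 : Y.α))) fun z => ?_
    obtain ⟨⟨x, y⟩, rfl⟩ := Quot.exists_rep z
    obtain ⟨s, hs, g, hg⟩ := hSX x
    obtain ⟨t, ht, h, hh⟩ := hSY y
    exact ⟨⟨⟨s, hs⟩, ⟨t, ht⟩⟩, Quot.sound ⟨(g, h), by simp [hg, hh]⟩⟩

/-- The (diagonal) product of two `G`-sets in `S(G)`, for `G` Roelcke precompact.
This is the categorical product in `S(G)`, computed on underlying sets. -/
noncomputable def dprod (X Y : SmGSet G)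
    (hroelcke : ∀ U V : Subgroup G, IsOpen (U : Set G) → IsOpen (V : Set G) →
      Finite (DoubleCoset.Quotient (U : Set G) (V : Set G))) : SmGSet G where
  α := X.α × Y.α
  smul g p := (X.smul g p.1, Y.smul g p.2)
  one_smul p := by
    have h1 : X.smul 1 p.1 = p.1 := X.one_smul p.1
    have h2 : Y.smul 1 p.2 = p.2 := Y.one_smul p.2
    simp [h1, h2]
  mul_smul g h p := by
    have h1 : X.smul (g * h) p.1 = X.smul g (X.smul h p.1) := X.mul_smul _ _ _
    have h2 : Y.smul (g * h) p.2 = Y.smul g (Y.smul h p.2) := Y.mul_smul _ _ _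
    simp [h1, h2]
  smooth p := by
    have h : {g : G | (X.smul g p.1, Y.smul g p.2) = p} =
        {g : G | X.smul g p.1 = p.1} ∩ {g : G | Y.smul g p.2 = p.2} := by
      ext g
      simp only [Set.mem_setOf_eq, Set.mem_inter_iff, Prod.ext_iff]
    rw [h]
    exact (X.smooth p.1).inter (Y.smooth p.2)
  finitary := by
    obtain ⟨SX, hSXfin, hSX⟩ := X.exists_transversal
    obtain ⟨SY, hSYfin, hSY⟩ := Y.exists_transversal
    haveI := hSXfin.to_subtype
    haveI := hSYfin.to_subtype
    haveI : ∀ (s : SX) (t : SY),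
        Finite (DoubleCoset.Quotient ((X.stab (s : X.α) : Subgroup G) : Set G)
          ((Y.stab (t : Y.α) : Subgroup G) : Set G)) :=
      fun s t => hroelcke _ _ (X.stab_isOpen _) (Y.stab_isOpen _)
    refine Finite.of_surjective
      (fun w : Σ (s : SX) (t : SY),
          DoubleCoset.Quotient ((X.stab (s : X.α) : Subgroup G) : Set G)
            ((Y.stab (t : Y.α) : Subgroup G) : Set G) =>
        Quot.mk _ ((w.1 : X.α), Y.smul w.2.2.out (w.2.1 : Y.α))) fun z => ?_
    obtain ⟨⟨x, y⟩, rfl⟩ := Quot.exists_rep z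
    obtain ⟨s, hs, g, hgx⟩ := hSX x
    obtain ⟨t, ht, h, hhy⟩ := hSY (Y.smul g⁻¹ y)
    refine ⟨⟨⟨s, hs⟩, ⟨t, ht⟩, DoubleCoset.mk (X.stab s) (Y.stab t) h⟩, ?_⟩
    set r := (DoubleCoset.mk (X.stab s) (Y.stab t) h).out with hr
    have hout : DoubleCoset.mk (X.stab s) (Y.stab t) r = DoubleCoset.mk (X.stab s) (Y.stab t) h := by
      rw [hr]; exact Quotient.out_eq' _
    obtain ⟨u, hu, v, hv, huv⟩ := DoubleCoset.rel_iff.mp (Quotient.eq''.mp hout)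
    have hu' : X.smul u s = s := hu
    have hv' : Y.smul v t = t := hv
    have hxs : X.smul (g * u) s = x := by
      rw [X.mul_smul, hu', hgx]
    have hys : Y.smul (g * u) (Y.smul r t) = y := by
      have hassoc : g * u * r * v = g * h := by rw [huv]; group
      calc Y.smul (g * u) (Y.smul r t)
          = Y.smul (g * u * r) t := (Y.mul_smul (g * u) r t).symm
        _ = Y.smul (g * u * r) (Y.smul v t) := by rw [hv']
        _ = Y.smul (g * u * r * v) t := (Y.mul_smul (g * u * r) v t).symm
        _ = Y.smul (g * h) t := by rw [hassoc]
        _ = Y.smul g (Y.smul h t) := Y.mul_smul g h t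
        _ = Y.smul g (Y.smul g⁻¹ y) := by rw [hhy]
        _ = y := by rw [← Y.mul_smul, mul_inv_cancel, Y.one_smul]
    exact Quot.sound ⟨g * u, by dsimp only; rw [hxs, hys]⟩

end SmGSet

namespace SmGSet

open CategoryTheory Limits

variable {G : Type} [Group G] [TopologicalSpace G]

theorem hom_ext' {X Y : SmGSet G} {f g : X ⟶ Y} (h : ∀ x, f.toFun x = g.toFun x) :
    f = g := SmHom.ext (funext h)

theorem toFun_congr {X Y : SmGSet G} {f g : X ⟶ Y} (h : f = g) (x : X.α) :
    f.toFun x = g.toFun x := by rw [h]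

theorem comp_toFun' {X Y Z : SmGSet G} (f : X ⟶ Y) (g : Y ⟶ Z) (x : X.α) :
    (f ≫ g).toFun x = g.toFun (f.toFun x) := rfl

/-- The orbit relation. -/
def orel (X : SmGSet G) : X.α → X.α → Prop := fun x y => ∃ g : G, X.smul g x = y

theorem orel_of_mk_eq (X : SmGSet G) {x y : X.α}
    (h : Quot.mk (orel X) x = Quot.mk (orel X) y) : ∃ g : G, X.smul g x = y :=
  (X.orbRel_equiv.eqvGen_iff).mp (Quot.eq.mp h)

/-- Sub-`G`-set on a stable subset. -/
def subobj (X : SmGSet G) (S : Set X.α) (hS : ∀ (g : G), ∀ x ∈ S, X.smul g x ∈ S) :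
    SmGSet G where
  α := S
  smul g x := ⟨X.smul g x.1, hS g x.1 x.2⟩
  one_smul x := Subtype.ext (X.one_smul x.1)
  mul_smul g h x := Subtype.ext (X.mul_smul g h x.1)
  smooth x := by
    have h : {g : G | (⟨X.smul g x.1, hS g x.1 x.2⟩ : S) = x} =
        {g : G | X.smul g x.1 = x.1} := by
      ext g; exact Subtype.ext_iff
    exact h ▸ X.smooth x.1
  finitary := by
    haveI := X.finitary
    refine Finite.of_injective
      (Quot.lift (fun s : S => Quot.mk (fun x y : X.α => ∃ g : G, X.smul g x = y) s.1) ?_) ?_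
    · rintro s t ⟨g, hg⟩
      exact Quot.sound ⟨g, congrArg Subtype.val hg⟩
    · refine Quot.ind fun s => Quot.ind fun t h => ?_
      obtain ⟨g, hg⟩ := (X.orbRel_equiv.eqvGen_iff).mp (Quot.eq.mp h)
      exact Quot.sound ⟨g, Subtype.ext hg⟩

/-- Inclusion of a sub-`G`-set. -/
def subincl (X : SmGSet G) (S : Set X.α) (hS : ∀ (g : G), ∀ x ∈ S, X.smul g x ∈ S) :
    subobj X S hS ⟶ X := ⟨Subtype.val, fun _ _ => rfl⟩

def orbitSet (X : SmGSet G) (j : Quot (orel X)) : Set X.α := {x | Quot.mk (orel X) x = j}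

theorem orbitSet_stable (X : SmGSet G) (j : Quot (orel X)) :
    ∀ (g : G), ∀ x ∈ X.orbitSet j, X.smul g x ∈ X.orbitSet j := by
  intro g x hx
  show Quot.mk (orel X) (X.smul g x) = j
  rw [← hx]
  exact (Quot.sound ⟨g, rfl⟩).symm

def orbitObj (X : SmGSet G) (j : Quot (orel X)) : SmGSet G :=
  subobj X (X.orbitSet j) (X.orbitSet_stable j)

def orbitIncl (X : SmGSet G) (j : Quot (orel X)) : X.orbitObj j ⟶ X :=
  subincl X (X.orbitSet j) (X.orbitSet_stable j)

theorem orbitObj_transitive (X : SmGSet G) (j : Quot (orel X)) :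
    IsTransitive (X.orbitObj j) := by
  constructor
  · exact ⟨⟨j.out, Quot.out_eq j⟩⟩
  · intro x y
    obtain ⟨g, hg⟩ := X.orel_of_mk_eq (x.2.trans y.2.symm)
    exact ⟨g, Subtype.ext hg⟩

/-- The cofan of orbit inclusions. -/
def orbitCofan (X : SmGSet G) : Cofan (fun j => X.orbitObj j) :=
  Cofan.mk X (fun j => X.orbitIncl j)

theorem orbit_desc_eq {X : SmGSet G} (t : Cofan (fun j => X.orbitObj j))
    (j : Quot (orel X)) (x : X.α) (hx : x ∈ X.orbitSet j) :
    (t.inj (Quot.mk (orel X) x)).toFun ⟨x, rfl⟩ = (t.inj j).toFun ⟨x, hx⟩ := by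
  have hx' : Quot.mk (orel X) x = j := hx
  subst hx'
  rfl

def orbitCofanIsColimit (X : SmGSet G) : IsColimit X.orbitCofan := by
  refine mkCofanColimit _
    (fun t => ⟨fun x => (t.inj (Quot.mk (orel X) x)).toFun ⟨x, rfl⟩, ?_⟩) ?_ ?_
  · intro g x
    have h1 : X.smul g x ∈ X.orbitSet (Quot.mk (orel X) x) :=
      X.orbitSet_stable _ g x rfl
    show (t.inj (Quot.mk (orel X) (X.smul g x))).toFun ⟨X.smul g x, rfl⟩ =
      t.pt.smul g ((t.inj (Quot.mk (orel X) x)).toFun ⟨x, rfl⟩)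
    rw [orbit_desc_eq t (Quot.mk (orel X) x) (X.smul g x) h1]
    have h2 : (⟨X.smul g x, h1⟩ : X.orbitSet (Quot.mk (orel X) x)) =
        (X.orbitObj (Quot.mk (orel X) x)).smul g ⟨x, rfl⟩ := Subtype.ext rfl
    rw [h2]
    exact (t.inj (Quot.mk (orel X) x)).equivariant g ⟨x, rfl⟩
  · intro t j
    refine hom_ext' fun x => ?_
    exact orbit_desc_eq t j x.1 x.2
  · intro t m hm
    refine hom_ext' fun x => ?_
    exact toFun_congr (hm (Quot.mk (orel X) x)) ⟨x, rfl⟩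

/-- The trivial `G`-set on `Bool`. -/
def trivBool : SmGSet G where
  α := Bool
  smul _ x := x
  one_smul _ := rfl
  mul_smul _ _ _ := rfl
  smooth x := by
    have h : {g : G | x = x} = Set.univ := Set.eq_univ_of_forall fun _ => rfl
    exact h ▸ isOpen_univ
  finitary := Finite.of_surjective (Quot.mk _) fun q => q.exists_rep

/-- Colimit cocones of finite discrete diagrams are jointly surjective. -/
theorem covering {J : Type} (F : Discrete J ⥤ SmGSet G) (c : Cocone F) (hc : IsColimit c)
    (z : c.pt.α) : ∃ (j : J) (t : (F.obj ⟨j⟩).α), (c.ι.app ⟨j⟩).toFun t = z := by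
  classical
  set S : Set c.pt.α := ⋃ j : J, Set.range (c.ι.app ⟨j⟩).toFun with hSdef
  have hstable : ∀ (g : G) (x : c.pt.α), x ∈ S → c.pt.smul g x ∈ S := by
    rintro g x hx
    obtain ⟨_, ⟨j, rfl⟩, t, rfl⟩ := hx
    exact Set.mem_iUnion.2 ⟨j, Set.mem_range.2 ⟨(F.obj ⟨j⟩).smul g t,
      (c.ι.app ⟨j⟩).equivariant g t⟩⟩
  have hstable' : ∀ (g : G) (x : c.pt.α), x ∈ S ↔ c.pt.smul g x ∈ S := fun g x =>
    ⟨hstable g x, fun h => by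
      have h2 := hstable g⁻¹ _ h
      rwa [← c.pt.mul_smul, inv_mul_cancel, c.pt.one_smul] at h2⟩
  let m₁ : c.pt ⟶ (trivBool : SmGSet G) :=
    ⟨fun x => if x ∈ S then true else false, fun g x => by
      show (if c.pt.smul g x ∈ S then true else false) = (if x ∈ S then true else false)
      by_cases h : x ∈ S
      · rw [if_pos h, if_pos ((hstable' g x).mp h)]
      · rw [if_neg h, if_neg (fun hc' => h ((hstable' g x).mpr hc'))]⟩
  let m₂ : c.pt ⟶ (trivBool : SmGSet G) := ⟨fun _ => true, fun _ _ => rfl⟩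
  have hm : m₁ = m₂ := by
    refine hc.hom_ext ?_
    rintro ⟨j⟩
    refine hom_ext' fun t => ?_
    show (if (c.ι.app ⟨j⟩).toFun t ∈ S then true else false) = true
    rw [if_pos (Set.mem_iUnion.2 ⟨j, Set.mem_range.2 ⟨t, rfl⟩⟩)]
  have hz : (if z ∈ S then true else false) = true := toFun_congr hm z
  by_cases h : z ∈ S
  · obtain ⟨_, ⟨j, rfl⟩, t, ht⟩ := h
    exact ⟨j, t, ht⟩
  · rw [if_neg h] at hz; exact absurd hz (by simp)

def dFst (X Y : SmGSet G)
    (hro : ∀ U V : Subgroup G, IsOpen (U : Set G) → IsOpen (V : Set G) →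
      Finite (DoubleCoset.Quotient (U : Set G) (V : Set G))) : dprod X Y hro ⟶ X :=
  ⟨Prod.fst, fun _ _ => rfl⟩

def dSnd (X Y : SmGSet G)
    (hro : ∀ U V : Subgroup G, IsOpen (U : Set G) → IsOpen (V : Set G) →
      Finite (DoubleCoset.Quotient (U : Set G) (V : Set G))) : dprod X Y hro ⟶ Y :=
  ⟨Prod.snd, fun _ _ => rfl⟩

noncomputable def dprodFan (X Y : SmGSet G)
    (hro : ∀ U V : Subgroup G, IsOpen (U : Set G) → IsOpen (V : Set G) →
      Finite (DoubleCoset.Quotient (U : Set G) (V : Set G))) : BinaryFan X Y :=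
  BinaryFan.mk (dFst X Y hro) (dSnd X Y hro)

noncomputable def dprodFanIsLimit (X Y : SmGSet G)
    (hro : ∀ U V : Subgroup G, IsOpen (U : Set G) → IsOpen (V : Set G) →
      Finite (DoubleCoset.Quotient (U : Set G) (V : Set G))) : IsLimit (dprodFan X Y hro) := by
  refine BinaryFan.isLimitMk
    (fun s => ⟨fun x => (s.fst.toFun x, s.snd.toFun x), fun g x => ?_⟩)
    (fun s => hom_ext' fun x => rfl) (fun s => hom_ext' fun x => rfl)
    (fun s m h₁ h₂ => hom_ext' fun x => ?_)
  · exact Prod.ext (s.fst.equivariant g x) (s.snd.equivariant g x)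
  · exact Prod.ext (toFun_congr h₁ x) (toFun_congr h₂ x)

/-- Limit cones over binary discrete diagrams are "jointly surjective" (pairing map
is onto). -/
theorem prodCover
    (hro : ∀ U V : Subgroup G, IsOpen (U : Set G) → IsOpen (V : Set G) →
      Finite (DoubleCoset.Quotient (U : Set G) (V : Set G)))
    (F : Discrete WalkingPair ⥤ SmGSet G) (c : Cone F) (hc : IsLimit c)
    (u : (F.obj ⟨WalkingPair.left⟩).α) (v : (F.obj ⟨WalkingPair.right⟩).α) :
    ∃ w : c.pt.α, (c.π.app ⟨WalkingPair.left⟩).toFun w = u ∧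
      (c.π.app ⟨WalkingPair.right⟩).toFun w = v := by
  let P := dprod (F.obj ⟨WalkingPair.left⟩) (F.obj ⟨WalkingPair.right⟩) hro
  let s : Cone F :=
    { pt := P
      π := Discrete.natTrans (fun j =>
        match j with
        | ⟨WalkingPair.left⟩ =>
            (⟨Prod.fst, fun _ _ => rfl⟩ : P ⟶ F.obj ⟨WalkingPair.left⟩)
        | ⟨WalkingPair.right⟩ =>
            (⟨Prod.snd, fun _ _ => rfl⟩ : P ⟶ F.obj ⟨WalkingPair.right⟩)) }
  refine ⟨(hc.lift s).toFun (u, v), ?_, ?_⟩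
  · exact toFun_congr (hc.fac s ⟨WalkingPair.left⟩) (u, v)
  · exact toFun_congr (hc.fac s ⟨WalkingPair.right⟩) (u, v)

/-- Quotient of a `G`-set by a stable relation. -/
def quotObj [ContinuousMul G] (X : SmGSet G) (r : X.α → X.α → Prop)
    (hr : ∀ (g : G) (x y : X.α), r x y → r (X.smul g x) (X.smul g y)) : SmGSet G where
  α := Quot r
  smul g := Quot.map (X.smul g) (hr g)
  one_smul := Quot.ind fun x => congrArg (Quot.mk r) (X.one_smul x)
  mul_smul g h := Quot.ind fun x => congrArg (Quot.mk r) (X.mul_smul g h x)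
  smooth := by
    refine Quot.ind fun x => ?_
    let V : Subgroup G :=
      { carrier := {g : G | Quot.map (X.smul g) (hr g) (Quot.mk r x) = Quot.mk r x}
        one_mem' := congrArg (Quot.mk r) (X.one_smul x)
        mul_mem' := by
          intro a b ha hb
          show Quot.mk r (X.smul (a * b) x) = Quot.mk r x
          have ha' : Quot.mk r (X.smul a x) = Quot.mk r x := ha
          have hb' : Quot.mk r (X.smul b x) = Quot.mk r x := hb
          have h2 : Quot.mk r (X.smul a (X.smul b x)) = Quot.mk r (X.smul a x) :=
            congrArg (Quot.map (X.smul a) (hr a)) hb'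
          rw [congrArg (Quot.mk r) (X.mul_smul a b x)]
          exact h2.trans ha'
        inv_mem' := by
          intro a ha
          show Quot.mk r (X.smul a⁻¹ x) = Quot.mk r x
          have ha' : Quot.mk r (X.smul a x) = Quot.mk r x := ha
          have h2 : Quot.mk r (X.smul a⁻¹ (X.smul a x)) = Quot.mk r (X.smul a⁻¹ x) :=
            congrArg (Quot.map (X.smul a⁻¹) (hr a⁻¹)) ha'
          have h3 : X.smul a⁻¹ (X.smul a x) = x := by
            rw [← X.mul_smul, inv_mul_cancel, X.one_smul]
          exact (h2.symm.trans (congrArg (Quot.mk r) h3)) }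
    have hle : X.stab x ≤ V := fun g hg =>
      show Quot.mk r (X.smul g x) = Quot.mk r x from congrArg (Quot.mk r) hg
    exact Subgroup.isOpen_mono hle (X.stab_isOpen x)
  finitary := by
    haveI := X.finitary
    let rq : Quot r → Quot r → Prop := fun x y => ∃ g : G, Quot.map (X.smul g) (hr g) x = y
    show Finite (Quot rq)
    have hresp : ∀ x y : X.α, (∃ g : G, X.smul g x = y) →
        Quot.mk rq (Quot.mk r x) = Quot.mk rq (Quot.mk r y) := by
      rintro x y ⟨g, hg⟩
      exact Quot.sound ⟨g, congrArg (Quot.mk r) hg⟩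
    refine Finite.of_surjective
      (fun q : Quot (fun x y : X.α => ∃ g : G, X.smul g x = y) =>
        Quot.lift (fun x : X.α => Quot.mk rq (Quot.mk r x)) hresp q) ?_
    intro b
    induction b using Quot.ind with
    | _ y =>
      induction y using Quot.ind with
      | _ x => exact ⟨Quot.mk _ x, rfl⟩

def quotMap [ContinuousMul G] (X : SmGSet G) (r : X.α → X.α → Prop)
    (hr : ∀ (g : G) (x y : X.α), r x y → r (X.smul g x) (X.smul g y)) :
    X ⟶ quotObj X r hr := ⟨Quot.mk r, fun _ _ => rfl⟩

open WalkingParallelPair WalkingParallelPairHom in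
/-- A cocone over a parallel pair whose leg is a surjection with kernel exactly the
equivalence relation generated by the pair is a colimit. -/
noncomputable def cofork_isColimit (F : WalkingParallelPair ⥤ SmGSet G) (c : Cocone F)
    (hs : Function.Surjective (c.ι.app one).toFun)
    (hk : ∀ u v, (c.ι.app one).toFun u = (c.ι.app one).toFun v →
      Relation.EqvGen (fun u v => ∃ t, (F.map left).toFun t = u ∧
        (F.map right).toFun t = v) u v) :
    IsColimit c := by
  have hconst : ∀ (s : Cocone F) (u v : (F.obj one).α),
      (c.ι.app one).toFun u = (c.ι.app one).toFun v →
      (s.ι.app one).toFun u = (s.ι.app one).toFun v := by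
    intro s u v h
    have H := hk u v h
    clear h
    induction H with
    | rel u v h' =>
      obtain ⟨t, h1, h2⟩ := h'
      calc (s.ι.app one).toFun u = (s.ι.app one).toFun ((F.map left).toFun t) := by rw [h1]
        _ = (s.ι.app zero).toFun t := (toFun_congr (s.w left) t)
        _ = (s.ι.app one).toFun ((F.map right).toFun t) := (toFun_congr (s.w right) t).symm
        _ = (s.ι.app one).toFun v := by rw [h2]
    | refl => rfl
    | symm _ _ _ ih => exact ih.symm
    | trans _ _ _ _ _ ih1 ih2 => exact ih1.trans ih2
  choose pre hpre using hs
  let descHom : ∀ s : Cocone F, c.pt ⟶ s.pt := fun s =>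
    ⟨fun z => (s.ι.app one).toFun (pre z), by
      intro g z
      have e1 : (c.ι.app one).toFun (pre (c.pt.smul g z)) =
          (c.ι.app one).toFun ((F.obj one).smul g (pre z)) := by
        have h1 : (c.ι.app one).toFun (pre (c.pt.smul g z)) = c.pt.smul g z := hpre _
        have h2 : (c.ι.app one).toFun ((F.obj one).smul g (pre z)) =
            c.pt.smul g ((c.ι.app one).toFun (pre z)) := (c.ι.app one).equivariant g (pre z)
        rw [h1, h2, hpre z]
      calc (s.ι.app one).toFun (pre (c.pt.smul g z))
          = (s.ι.app one).toFun ((F.obj one).smul g (pre z)) := hconst s _ _ e1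
        _ = s.pt.smul g ((s.ι.app one).toFun (pre z)) := (s.ι.app one).equivariant g _⟩
  have hfacone : ∀ (s : Cocone F) (x : (F.obj one).α),
      (descHom s).toFun ((c.ι.app one).toFun x) = (s.ι.app one).toFun x :=
    fun s x => hconst s _ _ (hpre _)
  refine { desc := descHom, fac := ?_, uniq := ?_ }
  · intro s j
    cases j with
    | one => exact hom_ext' fun x => hfacone s x
    | zero =>
      have hm1 : c.ι.app one ≫ descHom s = s.ι.app one := hom_ext' fun x => hfacone s x
      rw [← c.w left, Category.assoc, hm1, s.w left]
  · intro s m' w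
    refine hom_ext' fun z => ?_
    conv_lhs => rw [← hpre z]
    exact toFun_congr (w one) (pre z)

end SmGSet

/-- A topological group is pro-oligomorphic if it is Hausdorff, non-archimedean (open
subgroups form a neighborhood basis of the identity), and Roelcke precompact (`U\G/V`
is finite for all open subgroups `U`, `V`). -/
structure IsProOligomorphic (G : Type) [Group G] [TopologicalSpace G]
    [IsTopologicalGroup G] : Prop where
  t2 : T2Space G
  nonarch : ∀ s ∈ nhds (1 : G), ∃ U : Subgroup G, IsOpen (U : Set G) ∧ (U : Set G) ⊆ s
  roelcke : ∀ U V : Subgroup G, IsOpen (U : Set G) → IsOpen (V : Set G) →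
    Finite (DoubleCoset.Quotient (U : Set G) (V : Set G))

open SmGSet in
/-- Let `L` and `K` be pro-oligomorphic groups and let
`Θ : S(L) → S(K)` be an exact atomic functor. Let `X` be an object of `S(L)`, let `Z` be
an object of `S(K)`, and let `f : Θ(X) → Z` be a surjective morphism in `S(K)`. Then
there exist an object `Y` of `S(L)`, a surjective morphism `X → Y` in `S(L)`, and an
isomorphism `Θ(Y) ≅ Z` in `S(K)`. -/
theorem stmt_16 {L K : Type}
    [Group L] [TopologicalSpace L] [IsTopologicalGroup L]
    [Group K] [TopologicalSpace K] [IsTopologicalGroup K]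
    (hL : IsProOligomorphic L) (hK : IsProOligomorphic K)
    (Θ : SmGSet L ⥤ SmGSet K)
    (hexact₁ : Limits.PreservesFiniteLimits Θ)
    (hexact₂ : Limits.PreservesFiniteColimits Θ)
    (hatomic : ∀ X : SmGSet L, IsTransitive X → IsTransitive (Θ.obj X))
    (X : SmGSet L) (Z : SmGSet K) (f : Θ.obj X ⟶ Z)
    (hf : Function.Surjective (SmHom.toFun f)) :
    ∃ (Y : SmGSet L) (p : X ⟶ Y),
      Function.Surjective (SmHom.toFun p) ∧ Nonempty (Θ.obj Y ≅ Z) := by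
  classical
  haveI := hexact₁
  haveI := hexact₂
  let W : SmGSet L := dprod X X hL.roelcke
  let π₁ : W ⟶ X := dFst X X hL.roelcke
  let π₂ : W ⟶ X := dSnd X X hL.roelcke
  -- the kernel-pair subset of `Θ(W)`
  let R : Set (Θ.obj W).α :=
    {w | f.toFun ((Θ.map π₁).toFun w) = f.toFun ((Θ.map π₂).toFun w)}
  have hRstable : ∀ (g : K) (w : (Θ.obj W).α), w ∈ R → (Θ.obj W).smul g w ∈ R := by
    intro g w hw
    show f.toFun ((Θ.map π₁).toFun ((Θ.obj W).smul g w)) =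
      f.toFun ((Θ.map π₂).toFun ((Θ.obj W).smul g w))
    rw [(Θ.map π₁).equivariant, (Θ.map π₂).equivariant, f.equivariant, f.equivariant]
    show Z.smul g (f.toFun ((Θ.map π₁).toFun w)) = Z.smul g (f.toFun ((Θ.map π₂).toFun w))
    rw [hw]
  -- orbit covering of any `Θ`-image
  have hcover : ∀ (Q : SmGSet L) (z : (Θ.obj Q).α),
      ∃ (j : Quot (orel Q)) (t : (Θ.obj (Q.orbitObj j)).α),
        (Θ.map (Q.orbitIncl j)).toFun t = z := by
    intro Q z
    haveI : Finite (Quot (orel Q)) := Q.finitary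
    haveI : Fintype (Quot (orel Q)) := Fintype.ofFinite _
    have hco := Limits.isColimitOfPreserves Θ Q.orbitCofanIsColimit
    obtain ⟨j, t, ht⟩ := covering (Discrete.functor (fun j => Q.orbitObj j) ⋙ Θ)
      (Θ.mapCocone Q.orbitCofan) hco z
    exact ⟨j, t, ht⟩
  have htransΘ : ∀ (Q : SmGSet L) (j : Quot (orel Q)),
      IsTransitive (Θ.obj (Q.orbitObj j)) :=
    fun Q j => hatomic _ (Q.orbitObj_transitive j)
  have horbR : ∀ (j : Quot (orel W)),
      (∃ w ∈ R, ∃ t, (Θ.map (W.orbitIncl j)).toFun t = w) →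
      ∀ t', (Θ.map (W.orbitIncl j)).toFun t' ∈ R := by
    rintro j ⟨w, hw, t, ht⟩ t'
    obtain ⟨g, hg⟩ := (htransΘ W j).2 t t'
    rw [← hg, (Θ.map (W.orbitIncl j)).equivariant, ht]
    exact hRstable g w hw
  let J₀ : Set (Quot (orel W)) := {j | ∀ t, (Θ.map (W.orbitIncl j)).toFun t ∈ R}
  let R' : Set W.α := {q | Quot.mk (orel W) q ∈ J₀}
  have hR'stable : ∀ (g : L), ∀ q ∈ R', W.smul g q ∈ R' := by
    intro g q hq
    show Quot.mk (orel W) (W.smul g q) ∈ J₀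
    have hmk : Quot.mk (orel W) (W.smul g q) = Quot.mk (orel W) q :=
      (Quot.sound ⟨g, rfl⟩).symm
    rw [hmk]; exact hq
  let A : SmGSet L := subobj W R' hR'stable
  let ιA : A ⟶ W := subincl W R' hR'stable
  let a' : A ⟶ X := ιA ≫ π₁
  let b' : A ⟶ X := ιA ≫ π₂
  -- every point of `Θ(A)` lands in `R`
  have key2 : ∀ t : (Θ.obj A).α, (Θ.map ιA).toFun t ∈ R := by
    intro t
    obtain ⟨jA, s, hs⟩ := hcover A t
    obtain ⟨⟨x0, hx0⟩⟩ := (A.orbitObj_transitive jA).1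
    have hj' : Quot.mk (orel W) x0.1 ∈ J₀ := x0.2
    let u : A.orbitObj jA ⟶ W.orbitObj (Quot.mk (orel W) x0.1) :=
      ⟨fun y => ⟨y.1.1, by
        obtain ⟨g, hg⟩ := A.orel_of_mk_eq (y.2.trans hx0.symm)
        exact Quot.sound ⟨g, congrArg (fun a : A.α => a.1) hg⟩⟩,
       fun g y => Subtype.ext rfl⟩
    have hcomm : Θ.map (A.orbitIncl jA) ≫ Θ.map ιA =
        Θ.map u ≫ Θ.map (W.orbitIncl (Quot.mk (orel W) x0.1)) := by
      rw [← Θ.map_comp, ← Θ.map_comp]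
      congr 1
    have hcs := toFun_congr hcomm s
    rw [← hs]
    rw [show (Θ.map ιA).toFun ((Θ.map (A.orbitIncl jA)).toFun s) =
        (Θ.map (W.orbitIncl (Quot.mk (orel W) x0.1))).toFun ((Θ.map u).toFun s) from hcs]
    exact hj' _
  have hab : ∀ t : (Θ.obj A).α,
      f.toFun ((Θ.map a').toFun t) = f.toFun ((Θ.map b').toFun t) := by
    intro t
    have h1 : (Θ.map a').toFun t = (Θ.map π₁).toFun ((Θ.map ιA).toFun t) :=
      toFun_congr (Θ.map_comp ιA π₁) t
    have h2 : (Θ.map b').toFun t = (Θ.map π₂).toFun ((Θ.map ιA).toFun t) :=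
      toFun_congr (Θ.map_comp ιA π₂) t
    rw [h1, h2]
    exact key2 t
  have hfanmap := Limits.isLimitOfPreserves Θ (dprodFanIsLimit X X hL.roelcke)
  have key1 : ∀ u v : (Θ.obj X).α, f.toFun u = f.toFun v →
      ∃ t : (Θ.obj A).α, (Θ.map a').toFun t = u ∧ (Θ.map b').toFun t = v := by
    intro u v huv
    obtain ⟨w, hw1, hw2⟩ := prodCover hK.roelcke (Limits.pair X X ⋙ Θ)
      (Θ.mapCone (dprodFan X X hL.roelcke)) hfanmap u v
    have hw1' : (Θ.map π₁).toFun w = u := hw1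
    have hw2' : (Θ.map π₂).toFun w = v := hw2
    have hwR : w ∈ R := by
      show f.toFun ((Θ.map π₁).toFun w) = f.toFun ((Θ.map π₂).toFun w)
      rw [hw1', hw2']; exact huv
    obtain ⟨j, s, hs⟩ := hcover W w
    have hj : j ∈ J₀ := horbR j ⟨w, hwR, s, hs⟩
    let vm : W.orbitObj j ⟶ A := ⟨fun y => ⟨y.1, by
        show Quot.mk (orel W) y.1 ∈ J₀
        rw [y.2]; exact hj⟩, fun g y => Subtype.ext rfl⟩
    have hcm : Θ.map (W.orbitIncl j) = Θ.map vm ≫ Θ.map ιA := by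
      rw [← Θ.map_comp]; congr 1
    have h3 : (Θ.map ιA).toFun ((Θ.map vm).toFun s) = w := by
      rw [← hs, hcm]; rfl
    refine ⟨(Θ.map vm).toFun s, ?_, ?_⟩
    · have h4 : (Θ.map a').toFun ((Θ.map vm).toFun s) =
          (Θ.map π₁).toFun ((Θ.map ιA).toFun ((Θ.map vm).toFun s)) :=
        toFun_congr (Θ.map_comp ιA π₁) _
      rw [h4, h3, hw1']
    · have h4 : (Θ.map b').toFun ((Θ.map vm).toFun s) =
          (Θ.map π₂).toFun ((Θ.map ιA).toFun ((Θ.map vm).toFun s)) :=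
        toFun_congr (Θ.map_comp ιA π₂) _
      rw [h4, h3, hw2']
  -- the quotient object
  let r : X.α → X.α → Prop := fun u v => (u, v) ∈ R'
  have hr : ∀ (g : L) (u v : X.α), r u v → r (X.smul g u) (X.smul g v) :=
    fun g u v h => hR'stable g (u, v) h
  let Y : SmGSet L := quotObj X r hr
  let p : X ⟶ Y := quotMap X r hr
  have psurj : Function.Surjective p.toFun := fun q => q.exists_rep
  have hcondL : a' ≫ p = b' ≫ p := hom_ext' fun t => Quot.sound t.2
  let cL : Limits.Cocone (Limits.parallelPair a' b') := Limits.Cofork.ofπ p hcondL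
  have hL1 : Limits.IsColimit cL := by
    refine cofork_isColimit _ cL psurj ?_
    intro u v h
    have h' : Quot.mk r u = Quot.mk r v := h
    refine Relation.EqvGen.mono ?_ u v (Quot.eq.mp h')
    intro u v huv
    exact ⟨⟨(u, v), huv⟩, rfl, rfl⟩
  have hL2 : Limits.IsColimit (Θ.mapCocone cL) := Limits.isColimitOfPreserves Θ hL1
  let cZ : Limits.Cocone (Limits.parallelPair a' b' ⋙ Θ) :=
    { pt := Z
      ι := { app := fun j => Limits.WalkingParallelPair.casesOn j (Θ.map a' ≫ f) f
             naturality := by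
               intro i j' m
               change Limits.WalkingParallelPairHom i j' at m
               cases m with
               | left =>
                 show Θ.map a' ≫ f = (Θ.map a' ≫ f) ≫ 𝟙 Z
                 rw [Category.comp_id]
               | right =>
                 show Θ.map b' ≫ f = (Θ.map a' ≫ f) ≫ 𝟙 Z
                 rw [Category.comp_id]
                 exact hom_ext' fun t => (hab t).symm
               | id =>
                 rw [show (Limits.WalkingParallelPairHom.id i : i ⟶ i) = 𝟙 i from rfl]
                 simp } }
  have hZ1 : Limits.IsColimit cZ := by
    refine cofork_isColimit _ cZ hf ?_
    intro u v h
    exact Relation.EqvGen.rel u v (key1 u v h)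
  exact ⟨Y, p, psurj, ⟨hL2.coconePointUniqueUpToIso hZ1⟩⟩
end

section
/- For every 𝔾-equivariant map f : ℝ^(n) → ℝ^(m) there exists a unique strictly increasing function i : {1, …, m} → {1, …, n} such that f(x₁, …, xₙ) = (x_{i(1)}, …, x_{i(m)}) for all (x₁, …, xₙ) ∈ ℝ^(n). In particular, the only 𝔾-equivariant map ℝ^(n) → ℝ^(n) is the identity; that is, the automorphism group of the 𝔾-set ℝ^(n) is trivial. -/
/-- The set `ℝ^(n)` of strictly increasing `n`-tuples of reals. -/
def RTuple (n : ℕ) : Type := { x : Fin n → ℝ // StrictMono x }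

/-- The coordinatewise action of `𝔾 = Aut(ℝ, <)` on `ℝ^(n)`. -/
def RTuple.act {n : ℕ} (g : ℝ ≃o ℝ) (x : RTuple n) : RTuple n :=
  ⟨fun i => g (x.1 i), fun _ _ hij => g.strictMono (x.2 hij)⟩

/-- The map fixing `(-∞, c]` and scaling `[c, ∞)` by `μ` around `c`. -/
noncomputable def scaleAbove (c μ : ℝ) (hμ : 0 < μ) : ℝ ≃o ℝ :=
  StrictMono.orderIsoOfSurjective (fun t => if t ≤ c then t else c + μ * (t - c))
    (by
      intro s t hst
      dsimp only
      split_ifs with hs ht ht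
      · exact hst
      · push_neg at ht; nlinarith
      · push_neg at hs; linarith
      · push_neg at hs; nlinarith)
    (by
      intro y
      by_cases hy : y ≤ c
      · exact ⟨y, by simp [hy]⟩
      · push_neg at hy
        have h0 : 0 < μ⁻¹ := inv_pos.mpr hμ
        refine ⟨c + μ⁻¹ * (y - c), ?_⟩
        have h1 : ¬ (c + μ⁻¹ * (y - c) ≤ c) := by nlinarith
        show (if c + μ⁻¹ * (y - c) ≤ c then c + μ⁻¹ * (y - c)
          else c + μ * (c + μ⁻¹ * (y - c) - c)) = y
        rw [if_neg h1]
        have h2 : μ * (c + μ⁻¹ * (y - c) - c) = y - c := by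
          rw [add_sub_cancel_left, ← mul_assoc, mul_inv_cancel₀ (ne_of_gt hμ), one_mul]
        linarith [h2])

lemma scaleAbove_apply (c μ : ℝ) (hμ : 0 < μ) (t : ℝ) :
    scaleAbove c μ hμ t = if t ≤ c then t else c + μ * (t - c) := by
  rfl

lemma scaleAbove_of_le {c μ t : ℝ} (hμ : 0 < μ) (h : t ≤ c) : scaleAbove c μ hμ t = t := by
  rw [scaleAbove_apply, if_pos h]

lemma scaleAbove_of_gt {c μ t : ℝ} (hμ : 0 < μ) (h : c < t) :
    scaleAbove c μ hμ t = c + μ * (t - c) := by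
  rw [scaleAbove_apply, if_neg (not_le.mpr h)]

lemma scaleAbove_of_ge {c μ t : ℝ} (hμ : 0 < μ) (h : c ≤ t) :
    scaleAbove c μ hμ t = c + μ * (t - c) := by
  rcases eq_or_lt_of_le h with rfl | h
  · rw [scaleAbove_of_le hμ le_rfl]; ring
  · exact scaleAbove_of_gt hμ h

lemma scaleAbove_scaleAbove {c μ : ℝ} (hμ : 0 < μ) (hμ' : 0 < μ⁻¹) (t : ℝ) :
    scaleAbove c μ⁻¹ hμ' (scaleAbove c μ hμ t) = t := by
  by_cases h : t ≤ c
  · rw [scaleAbove_of_le hμ h, scaleAbove_of_le hμ' h]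
  · push_neg at h
    rw [scaleAbove_of_gt hμ h, scaleAbove_of_gt hμ' (by nlinarith)]
    have h2 : μ⁻¹ * (c + μ * (t - c) - c) = t - c := by
      rw [add_sub_cancel_left, ← mul_assoc, inv_mul_cancel₀ (ne_of_gt hμ), one_mul]
    linarith [h2]

/-- A "bump": an order automorphism of `ℝ` fixing `(-∞, c] ∪ [d, ∞)` pointwise and
mapping `s` to `v`, where `c < s < d` and `c < v < d`. -/
lemma exists_bump (c s d v : ℝ) (hcs : c < s) (hsd : s < d) (hcv : c < v) (hvd : v < d) :
    ∃ g : ℝ ≃o ℝ, g s = v ∧ ∀ t, t ≤ c ∨ d ≤ t → g t = t := by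
  have hsc : (0:ℝ) < s - c := by linarith
  have hds : (0:ℝ) < d - s := by linarith
  have hsc' : s - c ≠ 0 := ne_of_gt hsc
  have hds' : d - s ≠ 0 := ne_of_gt hds
  set α := (v - c) / (s - c) with hα
  set β := (d - v) / (d - s) with hβ
  have hα0 : 0 < α := div_pos (by linarith) hsc
  have hβ0 : 0 < β := div_pos (by linarith) hds
  have hβα : 0 < β / α := div_pos hβ0 hα0
  have hβi : 0 < β⁻¹ := inv_pos.mpr hβ0
  have hαne : α ≠ 0 := ne_of_gt hα0
  have e0 : α * (s - c) = v - c := by rw [hα, div_mul_cancel₀ _ hsc']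
  refine ⟨((scaleAbove c α hα0).trans (scaleAbove v (β/α) hβα)).trans (scaleAbove d β⁻¹ hβi),
    ?_, ?_⟩
  · have h1 : scaleAbove c α hα0 s = v := by
      rw [scaleAbove_of_gt hα0 hcs]
      linarith [e0]
    simp only [OrderIso.trans_apply, h1]
    rw [scaleAbove_of_le hβα le_rfl, scaleAbove_of_le hβi hvd.le]
  · intro t ht
    simp only [OrderIso.trans_apply]
    rcases ht with h | h
    · rw [scaleAbove_of_le hα0 h, scaleAbove_of_le hβα (by linarith),
        scaleAbove_of_le hβi (by linarith)]
    · have hct : c < t := by linarith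
      rw [scaleAbove_of_gt hα0 hct]
      have h2 : v < c + α * (t - c) := by
        have h3 := mul_lt_mul_of_pos_left (show s - c < t - c by linarith) hα0
        linarith [e0, h3]
      rw [scaleAbove_of_gt hβα h2]
      have e : v + β/α * (c + α * (t - c) - v) = scaleAbove d β hβ0 t := by
        rw [scaleAbove_of_ge hβ0 h]
        have e2 : c + α * (t - c) - v = α * (t - s) := by
          have h4 : α * (t - c) = α * (t - s) + α * (s - c) := by ring
          linarith [e0, h4]
        rw [e2, ← mul_assoc, div_mul_cancel₀ _ hαne]
        have e1 : β * (d - s) = d - v := by rw [hβ, div_mul_cancel₀ _ hds']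
        have e4 : β * (t - s) = β * (t - d) + β * (d - s) := by ring
        linarith [e1, e4]
      rw [e, scaleAbove_scaleAbove hβ0 hβi]

lemma exists_max_lt {n : ℕ} (a : Fin n → ℝ) (y : ℝ) :
    ∃ c, c < y ∧ ∀ i, a i < y → a i ≤ c := by
  by_cases h : ∃ i, a i < y
  · obtain ⟨i0, hi0⟩ := h
    set F := (Finset.univ.image a).filter (· < y) with hF
    have hne : F.Nonempty := ⟨a i0, by simp [hF, hi0]⟩
    refine ⟨F.max' hne, (Finset.mem_filter.mp (F.max'_mem hne)).2, ?_⟩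
    intro i hi
    exact F.le_max' _ (by simp [hF, hi])
  · exact ⟨y - 1, by linarith, fun i hi => absurd ⟨i, hi⟩ h⟩

lemma exists_min_gt {n : ℕ} (a : Fin n → ℝ) (y : ℝ) :
    ∃ d, y < d ∧ ∀ i, y < a i → d ≤ a i := by
  by_cases h : ∃ i, y < a i
  · obtain ⟨i0, hi0⟩ := h
    set F := (Finset.univ.image a).filter (fun z => y < z) with hF
    have hne : F.Nonempty := ⟨a i0, by simp [hF, hi0]⟩
    refine ⟨F.min' hne, (Finset.mem_filter.mp (F.min'_mem hne)).2, ?_⟩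
    intro i hi
    exact F.min'_le _ (by simp [hF, hi])
  · exact ⟨y + 1, by linarith, fun i hi => absurd ⟨i, hi⟩ h⟩

/-- If `y` is not among the values of `a`, there is an order automorphism fixing all
the values of `a` and moving `y`. -/
lemma exists_fix_move {n : ℕ} (a : Fin n → ℝ) (y : ℝ) (hy : ∀ i, a i ≠ y) :
    ∃ g : ℝ ≃o ℝ, (∀ i, g (a i) = a i) ∧ g y ≠ y := by
  obtain ⟨c, hcy, hc⟩ := exists_max_lt a y
  obtain ⟨d, hyd, hd⟩ := exists_min_gt a y
  set v := (y + d)/2 with hv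
  have hyv : y < v := by rw [hv]; linarith
  have hvd : v < d := by rw [hv]; linarith
  obtain ⟨g, hgs, hgfix⟩ := exists_bump c y d v hcy hyd (lt_trans hcy hyv) hvd
  refine ⟨g, fun i => ?_, by rw [hgs]; exact hyv.ne'⟩
  rcases lt_trichotomy (a i) y with h | h | h
  · exact hgfix _ (Or.inl (hc i h))
  · exact absurd h (hy i)
  · exact hgfix _ (Or.inr (hd i h))

/-- `𝔾` acts transitively on `ℝ^(n)`. -/
lemma exists_map_tuple {n : ℕ} (a b : Fin n → ℝ) (ha : StrictMono a) (hb : StrictMono b) :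
    ∃ g : ℝ ≃o ℝ, ∀ i, g (a i) = b i := by
  suffices h : ∀ j : ℕ, j ≤ n → ∃ g : ℝ ≃o ℝ, ∀ i : Fin n, (i : ℕ) < j → g (a i) = b i by
    obtain ⟨g, hg⟩ := h n le_rfl
    exact ⟨g, fun i => hg i i.isLt⟩
  intro j
  induction j with
  | zero => exact fun _ => ⟨OrderIso.refl ℝ, fun i hi => absurd hi (Nat.not_lt_zero _)⟩
  | succ k ih =>
    intro hk
    obtain ⟨g, hg⟩ := ih (le_of_lt hk)
    rcases Nat.eq_zero_or_pos k with hk0 | hkpos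
    · subst hk0
      refine ⟨g.trans (OrderIso.addRight (b ⟨0, hk⟩ - g (a ⟨0, hk⟩))), fun i hi => ?_⟩
      have hie : i = ⟨0, hk⟩ := Fin.ext (Nat.lt_one_iff.mp hi)
      subst hie
      simp only [OrderIso.trans_apply, OrderIso.addRight_apply]
      ring
    · obtain ⟨kp, rfl⟩ : ∃ kp, k = kp + 1 := ⟨k - 1, by omega⟩
      have hkp : kp < n := by omega
      have hprevlt : (⟨kp, hkp⟩ : Fin n) < ⟨kp + 1, hk⟩ := Fin.mk_lt_mk.mpr (Nat.lt_succ_self kp)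
      have hcp : g (a ⟨kp, hkp⟩) = b ⟨kp, hkp⟩ := hg _ (Nat.lt_succ_self kp)
      have hs : b ⟨kp, hkp⟩ < g (a ⟨kp + 1, hk⟩) := by
        rw [← hcp]; exact g.strictMono (ha hprevlt)
      have hvv : b ⟨kp, hkp⟩ < b ⟨kp + 1, hk⟩ := hb hprevlt
      have hμ : 0 < (b ⟨kp + 1, hk⟩ - b ⟨kp, hkp⟩) / (g (a ⟨kp + 1, hk⟩) - b ⟨kp, hkp⟩) :=
        div_pos (by linarith) (by linarith)
      refine ⟨g.trans (scaleAbove (b ⟨kp, hkp⟩) _ hμ), fun i hi => ?_⟩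
      simp only [OrderIso.trans_apply]
      rcases Nat.lt_or_ge (i : ℕ) (kp + 1) with h | h
      · rw [hg i h]
        exact scaleAbove_of_le hμ (hb.monotone (Fin.le_def.mpr (Nat.lt_succ_iff.mp h)))
      · have hie : i = ⟨kp + 1, hk⟩ := Fin.ext (show (i : ℕ) = kp + 1 by omega)
        subst hie
        rw [scaleAbove_of_gt hμ hs, div_mul_eq_mul_div, mul_div_assoc,
          div_self (by linarith), mul_one]
        ring

/-- The base point: the tuple `(0, 1, …, n-1)`. -/
noncomputable def basePt (n : ℕ) : RTuple n :=
  ⟨fun i => ((i : ℕ) : ℝ), fun i j h => Nat.cast_lt.mpr (Fin.lt_def.mp h)⟩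

lemma key (n m : ℕ) (f : RTuple n → RTuple m)
    (hf : ∀ (g : ℝ ≃o ℝ) (x : RTuple n), f (RTuple.act g x) = RTuple.act g (f x)) :
    ∃! i : Fin m → Fin n, StrictMono i ∧ ∀ (x : RTuple n) (j : Fin m),
      (f x).1 j = x.1 (i j) := by
  set x0 : RTuple n := basePt n with hx0
  have hrange : ∀ j, ∃ k, (f x0).1 j = x0.1 k := by
    intro j
    by_contra hcon
    push_neg at hcon
    obtain ⟨g, hgfix, hgy⟩ := exists_fix_move x0.1 ((f x0).1 j) (fun k => (hcon k).symm)
    have hx : RTuple.act g x0 = x0 := Subtype.ext (funext hgfix)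
    have h2 := hf g x0
    rw [hx] at h2
    exact hgy (congrArg (fun z => z.1 j) h2).symm
  choose i hi using hrange
  have himono : StrictMono i := by
    intro j j' h
    have h1 : (f x0).1 j < (f x0).1 j' := (f x0).2 h
    rw [hi j, hi j'] at h1
    exact x0.2.lt_iff_lt.mp h1
  have hmain : ∀ (x : RTuple n) (j : Fin m), (f x).1 j = x.1 (i j) := by
    intro x j
    obtain ⟨g, hg⟩ := exists_map_tuple x0.1 x.1 x0.2 x.2
    have hx : RTuple.act g x0 = x := Subtype.ext (funext hg)
    have h2 := hf g x0
    rw [hx] at h2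
    calc (f x).1 j = g ((f x0).1 j) := by rw [h2]; rfl
      _ = g (x0.1 (i j)) := by rw [hi]
      _ = x.1 (i j) := hg _
  refine ⟨i, ⟨himono, hmain⟩, ?_⟩
  rintro i' ⟨-, hi'⟩
  funext j
  exact x0.2.injective ((hi' x0 j).symm.trans (hi j))

/-- For every `𝔾`-equivariant map `f : ℝ^(n) → ℝ^(m)` there exists a
unique strictly increasing function `i : {1, …, m} → {1, …, n}` such that
`f(x₁, …, xₙ) = (x_{i(1)}, …, x_{i(m)})` for all `(x₁, …, xₙ) ∈ ℝ^(n)`. In particular,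
the only `𝔾`-equivariant map `ℝ^(n) → ℝ^(n)` is the identity; that is, the automorphism
group of the `𝔾`-set `ℝ^(n)` is trivial. -/
theorem stmt_19 (n m : ℕ) (f : RTuple n → RTuple m)
    (hf : ∀ (g : ℝ ≃o ℝ) (x : RTuple n), f (RTuple.act g x) = RTuple.act g (f x)) :
    (∃! i : Fin m → Fin n, StrictMono i ∧ ∀ (x : RTuple n) (j : Fin m),
      (f x).1 j = x.1 (i j)) ∧
    (∀ f' : RTuple n → RTuple n,
      (∀ (g : ℝ ≃o ℝ) (x : RTuple n), f' (RTuple.act g x) = RTuple.act g (f' x)) →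
        f' = id) := by
  refine ⟨key n m f hf, ?_⟩
  intro f' hf'
  obtain ⟨i, ⟨hmono, hval⟩, -⟩ := key n n f' hf'
  have hsurj : Function.Surjective i :=
    Finite.surjective_of_injective hmono.injective
  have hid : i = id := by
    have hwf : WellFoundedLT (Fin n) := inferInstance
    have h1 : StrictMono (id : Fin n → Fin n) := strictMono_id
    have h2 : Set.range i = Set.range (id : Fin n → Fin n) := by
      rw [Set.range_id, Set.range_eq_univ.mpr hsurj]
    exact (StrictMono.range_inj hmono h1).1 h2
  funext x
  refine Subtype.ext (funext fun j => ?_)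
  rw [hval x j, hid]
  rfl
end
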